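/- arXiv:0709.1436 — 3 statements merged into one kernel-verified Lean document; each statement's English description precedes it below -/
import Mathlib

section
/- Let n ≥ 1 and let g be holomorphic on the open unit ball B of ℂⁿ. If the extended Cesàro operator T_g is bounded on the Zygmund space Z, i.e. there exists C > 0 such that ‖T_g f‖ ≤ C‖f‖ for every f ∈ Z, then g belongs to Z, i.e. sup_{z∈B}(1-|z|²)|R(Rg)(z)| < ∞. -/
open MeasureTheory Metric Filter

noncomputable section

/-- `E n` is `ℂⁿ` with the Euclidean structure. -/
abbrev E (n : ℕ) := EuclideanSpace ℂ (Fin n)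

/-- The open unit ball of `ℂⁿ`. -/
def uball (n : ℕ) : Set (E n) := Metric.ball 0 1

/-- The radial derivative `Rf(z) = ∑ z_j ∂f/∂z_j(z)`. -/
def rad (n : ℕ) (f : E n → ℂ) (z : E n) : ℂ :=
  ∑ j : Fin n, z j * fderiv ℂ f z (EuclideanSpace.single j 1)

/-- The set of values `(1-|z|²)|R(Rf)(z)|`, `z ∈ B`. -/
def zygSet (n : ℕ) (f : E n → ℂ) : Set ℝ :=
  {x | ∃ z ∈ uball n, x = (1 - ‖z‖ ^ 2) * ‖rad n (rad n f) z‖}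

/-- Membership in the Zygmund space: `sup_{z∈B} (1-|z|²)|R(Rf)(z)| < ∞`. -/
def memZ (n : ℕ) (f : E n → ℂ) : Prop := BddAbove (zygSet n f)

/-- The Zygmund norm `‖f‖ = |f(0)| + sup_{z∈B} (1-|z|²)|R(Rf)(z)|`. -/
def zygNorm (n : ℕ) (f : E n → ℂ) : ℝ :=
  ‖f 0‖ + sSup (zygSet n f)

/-- The extended Cesàro operator `T_g f(z) = ∫₀¹ f(tz) Rg(tz) dt/t`. -/
def Tg (n : ℕ) (g f : E n → ℂ) (z : E n) : ℂ :=
  ∫ t in (0:ℝ)..1, f (t • z) * rad n g (t • z) / (t : ℂ)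

/-- The operator `I_g f(z) = ∫₀¹ Rf(tz) g(tz) dt/t`. -/
def Ig (n : ℕ) (g f : E n → ℂ) (z : E n) : ℂ :=
  ∫ t in (0:ℝ)..1, rad n f (t • z) * g (t • z) / (t : ℂ)

lemma sum_smul_single (n : ℕ) (w : E n) :
    ∑ j : Fin n, w j • EuclideanSpace.single j (1:ℂ) = w := by
  have := (EuclideanSpace.basisFun (Fin n) ℂ).toBasis.sum_repr w
  simpa [EuclideanSpace.basisFun_apply] using this

lemma rad_eq_fderiv (n : ℕ) (f : E n → ℂ) (w : E n) :
    rad n f w = fderiv ℂ f w w := by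
  have : fderiv ℂ f w w = fderiv ℂ f w (∑ j : Fin n, w j • EuclideanSpace.single j (1:ℂ)) := by
    rw [sum_smul_single]
  rw [this, map_sum]
  simp [rad, smul_eq_mul]

lemma Tg_one_eq {n : ℕ} {g : E n → ℂ} (hg : DifferentiableOn ℂ g (uball n))
    {z : E n} (hz : z ∈ uball n) :
    Tg n g (fun _ => 1) z = g z - g 0 := by
  have hball : IsOpen (uball n) := isOpen_ball
  set S : Set ℂ := (fun w : ℂ => w • z) ⁻¹' uball n with hS
  have hSopen : IsOpen S := hball.preimage (by fun_prop)
  have hmem : ∀ t : ℝ, t ∈ Set.Icc (0:ℝ) 1 → (t : ℂ) ∈ S := by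
    intro t ht
    simp only [hS, Set.mem_preimage, uball, mem_ball, dist_zero_right]
    simp only [uball, mem_ball, dist_zero_right] at hz
    calc ‖(t:ℂ) • z‖ = ‖(t:ℂ)‖ * ‖z‖ := norm_smul _ _
    _ ≤ 1 * ‖z‖ := by
        apply mul_le_mul_of_nonneg_right _ (norm_nonneg z)
        rw [Complex.norm_real, Real.norm_eq_abs, abs_of_nonneg ht.1]; exact ht.2
    _ < 1 := by simpa using hz
  set φ : ℂ → ℂ := fun w => g (w • z) with hφdef
  have hsmul : Differentiable ℂ (fun w : ℂ => w • z) :=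
    (ContinuousLinearMap.toSpanSingleton ℂ z).differentiable
  have hφ : DifferentiableOn ℂ φ S :=
    hg.comp hsmul.differentiableOn (fun w hw => hw)
  have hφa : AnalyticOnNhd ℂ φ S := hφ.analyticOnNhd hSopen
  have hder : ∀ w ∈ S, HasDerivAt φ (fderiv ℂ g (w • z) z) w := by
    intro w hw
    have hgd : DifferentiableAt ℂ g (w • z) := hg.differentiableAt (hball.mem_nhds hw)
    have h1 : HasDerivAt (fun u : ℂ => u • z) z w := by
      simpa using (hasDerivAt_id w).smul_const z
    exact hgd.hasFDerivAt.comp_hasDerivAt w h1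
  have hderiv_eq : ∀ w ∈ S, deriv φ w = fderiv ℂ g (w • z) z :=
    fun w hw => (hder w hw).deriv
  -- continuity of the derivative
  have hdc : ContinuousOn (deriv φ) S := (hφa.deriv).continuousOn
  have hcont : ContinuousOn (fun t : ℝ => deriv φ (t:ℂ)) (Set.Icc 0 1) :=
    hdc.comp Complex.continuous_ofReal.continuousOn (fun t ht => hmem t ht)
  have hint : IntervalIntegrable (fun t : ℝ => deriv φ (t:ℂ)) volume 0 1 := by
    apply ContinuousOn.intervalIntegrable
    rwa [Set.uIcc_of_le zero_le_one]
  have hderivR : ∀ t ∈ Set.uIcc (0:ℝ) 1,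
      HasDerivAt (fun s : ℝ => φ (s:ℂ)) (deriv φ (t:ℂ)) t := by
    intro t ht
    rw [Set.uIcc_of_le zero_le_one] at ht
    have := hder (t:ℂ) (hmem t ht)
    rw [← hderiv_eq _ (hmem t ht)] at this
    exact this.comp_ofReal
  have hFTC := intervalIntegral.integral_eq_sub_of_hasDerivAt hderivR hint
  have hcongr : (∫ t in (0:ℝ)..1, (1:ℂ) * rad n g (t • z) / (t:ℂ))
      = ∫ t in (0:ℝ)..1, deriv φ (t:ℂ) := by
    apply intervalIntegral.integral_congr_ae
    filter_upwards [] with t ht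
    rw [Set.uIoc_of_le zero_le_one] at ht
    have htne : (t:ℂ) ≠ 0 := by exact_mod_cast ne_of_gt ht.1
    have htIcc : t ∈ Set.Icc (0:ℝ) 1 := ⟨le_of_lt ht.1, ht.2⟩
    have h2 : t • z = (t:ℂ) • z := (Complex.coe_smul t z).symm
    rw [one_mul, rad_eq_fderiv, h2, (fderiv ℂ g ((t:ℂ) • z)).map_smul, smul_eq_mul,
      mul_div_cancel_left₀ _ htne, hderiv_eq _ (hmem t htIcc)]
  simp only [Tg]
  rw [hcongr, hFTC]
  simp [hφdef, Complex.coe_smul]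

lemma rad_congr {n : ℕ} {f h : E n → ℂ} {s : Set (E n)} (hs : IsOpen s)
    (hfh : ∀ w ∈ s, f w = h w) {z : E n} (hz : z ∈ s) : rad n f z = rad n h z := by
  have he : f =ᶠ[nhds z] h := eventually_of_mem (hs.mem_nhds hz) hfh
  unfold rad
  rw [he.fderiv_eq]

lemma rad_one (n : ℕ) : rad n (fun _ => (1:ℂ)) = fun _ => 0 := by
  funext w
  simp [rad, fderiv_const]

lemma memZ_one (n : ℕ) : BddAbove {x | ∃ z ∈ Metric.ball (0 : E n) 1,
    x = (1 - ‖z‖ ^ 2) * ‖rad n (rad n (fun _ => (1:ℂ))) z‖} := by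
  refine ⟨0, ?_⟩
  rintro x ⟨z, hz, rfl⟩
  rw [rad_one]
  simp [rad, fderiv_fun_const]

/-- **Theorem 1, (a) ⇒ (c).** If the extended Cesàro operator `T_g` is bounded on the
Zygmund space, then `g ∈ 𝒵`. -/
theorem memZ_of_Tg_bounded (n : ℕ) (hn : 1 ≤ n) (g : E n → ℂ)
    (hg : DifferentiableOn ℂ g (uball n))
    (hbdd : ∃ C > (0:ℝ), ∀ f : E n → ℂ, DifferentiableOn ℂ f (uball n) → memZ n f →
      memZ n (Tg n g f) ∧ zygNorm n (Tg n g f) ≤ C * zygNorm n f) :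
    memZ n g := by
  obtain ⟨C, hC, hB⟩ := hbdd
  have hopen : IsOpen (uball n) := isOpen_ball
  have hm1 : memZ n (fun _ : E n => 1) := memZ_one n
  have hT : memZ n (Tg n g fun _ => 1) :=
    (hB _ (differentiableOn_const 1) hm1).1
  have key : ∀ z ∈ uball n, rad n (rad n (Tg n g fun _ => 1)) z = rad n (rad n g) z := by
    intro z hz
    have e2 : ∀ w ∈ uball n, rad n (Tg n g fun _ => 1) w = rad n g w := by
      intro w hw
      rw [rad_congr hopen (fun u hu => Tg_one_eq hg hu) hw]
      simp only [rad, fderiv_sub_const]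
    exact rad_congr hopen e2 hz
  have hset : zygSet n (Tg n g fun _ => 1) = zygSet n g := by
    ext x
    simp only [zygSet, Set.mem_setOf_eq]
    constructor <;> rintro ⟨z, hz, rfl⟩ <;> exact ⟨z, hz, by rw [key z hz]⟩
  unfold memZ at hT ⊢
  rwa [hset] at hT
end
end

section
/- Let n ≥ 1 and let g be holomorphic on the open unit ball B of ℂⁿ. If g is bounded on B and g belongs to the weighted Bloch space B_log, i.e. sup_{z∈B}(1-|z|²)|Rg(z)|·log(2/(1-|z|²)) < ∞, then the operator I_g is bounded on the Zygmund space Z: there exists C > 0 such that ‖I_g f‖ ≤ C‖f‖ for every f ∈ Z. -/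
open MeasureTheory Metric Filter

noncomputable section

set_option maxHeartbeats 1000000
set_option synthInstance.maxHeartbeats 200000

instance (n : ℕ) : MeasurableSpace (EuclideanSpace ℂ (Fin n)) := borel _
instance (n : ℕ) : BorelSpace (EuclideanSpace ℂ (Fin n)) := ⟨rfl⟩

section basic
variable {n : ℕ}

lemma sum_single_eq (z : E n) : ∑ j, z j • EuclideanSpace.single j (1:ℂ) = z := by
  ext i
  rw [WithLp.ofLp_sum, Finset.sum_apply]
  simp [EuclideanSpace.single_apply]

lemma clm_apply_eq (A : E n →L[ℂ] ℂ) (v : E n) :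
    A v = ∑ j, v j * A (EuclideanSpace.single j 1) := by
  conv_lhs => rw [← sum_single_eq v]
  rw [map_sum]
  simp [smul_eq_mul]

lemma rad_apply (f : E n → ℂ) (z : E n) : rad n f z = fderiv ℂ f z z := by
  rw [rad, clm_apply_eq (fderiv ℂ f z) z]

lemma rad_zero (f : E n → ℂ) : rad n f 0 = 0 := by
  rw [rad_apply]; simp

lemma coord_norm_le (z : E n) (j : Fin n) : ‖z j‖ ≤ ‖z‖ := by
  have h1 : ‖z j‖^2 ≤ ∑ i, ‖z i‖^2 :=
    Finset.single_le_sum (f := fun i => ‖z i‖^2) (fun i _ => sq_nonneg (‖z i‖))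
      (Finset.mem_univ j)
  have h2 : ‖z‖^2 = ∑ i, ‖z i‖^2 := by
    rw [EuclideanSpace.norm_eq]
    exact Real.sq_sqrt (Finset.sum_nonneg (fun i _ => sq_nonneg ‖z i‖))
  nlinarith [norm_nonneg (z j), norm_nonneg z]

end basic

section cauchy
variable {n : ℕ}

lemma slice_hasDerivAt {f : E n → ℂ} {y v : E n} {l : ℂ} (h : DifferentiableAt ℂ f (y + l • v)) :
    HasDerivAt (fun l : ℂ => f (y + l • v)) (fderiv ℂ f (y + l • v) v) l := by
  have hin : HasDerivAt (fun l : ℂ => y + l • v) v l := by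
    simpa using ((hasDerivAt_id l).smul_const v).const_add y
  exact h.hasFDerivAt.comp_hasDerivAt l hin

lemma norm_fderiv_le_of_bound {f : E n → ℂ} {y : E n} {s M : ℝ} (hs : 0 < s)
    (hd : ∀ w ∈ closedBall y s, DifferentiableAt ℂ f w)
    (hM : ∀ w ∈ closedBall y s, ‖f w‖ ≤ M) : ‖fderiv ℂ f y‖ ≤ M / s := by
  have hM0 : 0 ≤ M := le_trans (norm_nonneg _) (hM y (mem_closedBall_self hs.le))
  refine ContinuousLinearMap.opNorm_le_bound _ (div_nonneg hM0 hs.le) (fun u => ?_)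
  rcases eq_or_ne u 0 with rfl | hu
  · simp [div_nonneg hM0 hs.le]
  have hu0 : 0 < ‖u‖ := norm_pos_iff.2 hu
  set R : NNReal := ⟨s / ‖u‖, (div_pos hs hu0).le⟩ with hRdef
  have hRs : (R:ℝ) = s / ‖u‖ := rfl
  have hr0 : 0 < (R:ℝ) := div_pos hs hu0
  set φ : ℂ → ℂ := fun l => f (y + l • u) with hφ
  have hmem : ∀ l : ℂ, ‖l‖ ≤ (R:ℝ) → y + l • u ∈ closedBall y s := by
    intro l hl
    rw [mem_closedBall, dist_eq_norm]
    simp only [add_sub_cancel_left, norm_smul]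
    calc ‖l‖ * ‖u‖ ≤ (R:ℝ) * ‖u‖ := by gcongr
      _ = s := by rw [hRs]; exact div_mul_cancel₀ _ hu0.ne'
  have hdφ : DifferentiableOn ℂ φ (closedBall 0 (R:ℝ)) := by
    intro l hl
    rw [mem_closedBall, dist_zero_right] at hl
    exact ((hd _ (hmem l hl)).comp l
      ((differentiableAt_id.smul_const u).const_add y)).differentiableWithinAt
  have hp : HasFPowerSeriesOnBall φ (cauchyPowerSeries φ 0 (R:ℝ)) 0 R :=
    hdφ.hasFPowerSeriesOnBall (by exact_mod_cast hr0)
  have hder : HasDerivAt φ (fderiv ℂ f y u) 0 := by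
    have h0 : DifferentiableAt ℂ f (y + (0:ℂ) • u) := by
      simpa using hd y (mem_closedBall_self hs.le)
    have := slice_hasDerivAt (f := f) (y := y) (v := u) (l := 0) h0
    simpa using this
  have hcoef : fderiv ℂ f y u = cauchyPowerSeries φ 0 (R:ℝ) 1 (fun _ => 1) := by
    rw [← hder.deriv, hp.hasFPowerSeriesAt.deriv]
  have happ : ‖cauchyPowerSeries φ 0 (R:ℝ) 1 (fun _ => 1)‖ ≤
      ‖cauchyPowerSeries φ 0 (R:ℝ) 1‖ := by
    have := (cauchyPowerSeries φ 0 (R:ℝ) 1).le_opNorm (fun _ => (1:ℂ))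
    simpa using this
  have hb := norm_cauchyPowerSeries_le φ 0 (R:ℝ) 1
  have hcont : Continuous fun θ : ℝ => ‖φ (circleMap 0 (R:ℝ) θ)‖ := by
    rw [continuous_iff_continuousAt]
    intro θ
    refine ContinuousAt.norm ?_
    have hmemθ : y + circleMap 0 (R:ℝ) θ • u ∈ closedBall y s := by
      refine hmem _ ?_
      simp [norm_circleMap_zero, abs_of_pos hr0]
    have hin : Continuous fun θ : ℝ => y + circleMap 0 (R:ℝ) θ • u :=
      continuous_const.add ((continuous_circleMap 0 (R:ℝ)).smul continuous_const)
    exact ContinuousAt.comp (x := θ) (hd _ hmemθ).continuousAt hin.continuousAt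
  have hint : (∫ θ in (0:ℝ)..2*Real.pi, ‖φ (circleMap 0 (R:ℝ) θ)‖) ≤ 2*Real.pi * M := by
    have h1 : (∫ θ in (0:ℝ)..2*Real.pi, ‖φ (circleMap 0 (R:ℝ) θ)‖) ≤
        ∫ _θ in (0:ℝ)..2*Real.pi, M := by
      refine intervalIntegral.integral_mono_on (by positivity) (hcont.intervalIntegrable _ _)
        intervalIntegrable_const ?_
      intro θ _
      refine hM _ (hmem _ ?_)
      simp [norm_circleMap_zero, abs_of_pos hr0]
    simpa [mul_comm] using h1
  have hfinal : ‖fderiv ℂ f y u‖ ≤ ((2*Real.pi)⁻¹ * (2*Real.pi*M)) * |(R:ℝ)|⁻¹^1 := by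
    rw [hcoef]
    exact le_trans happ (le_trans hb (by gcongr))
  calc ‖fderiv ℂ f y u‖ ≤ ((2*Real.pi)⁻¹ * (2*Real.pi*M)) * |(R:ℝ)|⁻¹^1 := hfinal
    _ = M / s * ‖u‖ := by
        rw [abs_of_pos hr0, hRs]
        have hpi : (0:ℝ) < 2*Real.pi := by positivity
        field_simp

end cauchy

section lemA
variable {n : ℕ}

lemma dirDeriv_differentiableOn {U : Set (E n)} (hU : IsOpen U) {f : E n → ℂ}
    (hf : DifferentiableOn ℂ f U) (v : E n) :
    DifferentiableOn ℂ (fun z => fderiv ℂ f z v) U := by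
  intro z₀ hz₀
  refine DifferentiableAt.differentiableWithinAt ?_
  obtain ⟨ε, hε0, hεU⟩ := nhds_basis_closedBall.mem_iff.1 (hU.mem_nhds hz₀)
  set r : ℝ := ε / (3 * (‖v‖ + 1)) with hrdef
  have hr0 : 0 < r := by positivity
  set δ : ℝ := ε / 3 with hδdef
  have hδ0 : 0 < δ := by positivity
  have hrv : r * ‖v‖ ≤ ε / 3 := by
    rw [hrdef, div_mul_eq_mul_div, div_le_div_iff₀ (by positivity) (by norm_num)]
    nlinarith [norm_nonneg v, hε0.le]
  have hgeo : ∀ x ∈ closedBall z₀ δ, ∀ l : ℂ, ‖l‖ ≤ r →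
      x + l • v ∈ closedBall z₀ (2 * (ε/3)) := by
    intro x hx l hl
    rw [mem_closedBall] at hx ⊢
    rw [dist_eq_norm]
    have : x + l • v - z₀ = (x - z₀) + l • v := by abel
    rw [this]
    calc ‖(x - z₀) + l • v‖ ≤ ‖x - z₀‖ + ‖l‖ * ‖v‖ := by
          refine (norm_add_le _ _).trans ?_
          rw [norm_smul]
      _ ≤ δ + r * ‖v‖ := by
          refine add_le_add ?_ (by gcongr)
          rwa [← dist_eq_norm]
      _ ≤ ε/3 + ε/3 := add_le_add le_rfl hrv
      _ ≤ 2 * (ε/3) := by linarith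
  have hsub : closedBall z₀ (2 * (ε/3)) ⊆ closedBall z₀ ε :=
    closedBall_subset_closedBall (by linarith)
  have hdAt : ∀ w ∈ closedBall z₀ ε, DifferentiableAt ℂ f w := fun w hw =>
    hf.differentiableAt (hU.mem_nhds (hεU hw))
  obtain ⟨M, hMb⟩ : ∃ M, ∀ w ∈ closedBall z₀ ε, ‖f w‖ ≤ M :=
    (isCompact_closedBall z₀ ε).exists_bound_of_continuousOn
      (fun w hw => (hdAt w hw).continuousAt.continuousWithinAt)
  have hM0 : 0 ≤ M := le_trans (norm_nonneg _) (hMb z₀ (mem_closedBall_self hε0.le))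
  have hfd : ∀ x ∈ closedBall z₀ (2 * (ε/3)), ‖fderiv ℂ f x‖ ≤ M / (ε/3) := by
    intro x hx
    refine norm_fderiv_le_of_bound (by positivity) ?_ ?_
    · intro w hw
      refine hdAt w ?_
      rw [mem_closedBall] at hx hw ⊢
      calc dist w z₀ ≤ dist w x + dist x z₀ := dist_triangle _ _ _
        _ ≤ ε/3 + 2 * (ε/3) := add_le_add hw hx
        _ = ε := by ring
    · intro w hw
      refine hMb w ?_
      rw [mem_closedBall] at hx hw ⊢
      calc dist w z₀ ≤ dist w x + dist x z₀ := dist_triangle _ _ _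
        _ ≤ ε/3 + 2 * (ε/3) := add_le_add hw hx
        _ = ε := by ring
  set c : ℝ → ℂ := fun θ =>
    (2 * Real.pi * Complex.I)⁻¹ *
      (deriv (circleMap 0 r) θ * ((circleMap 0 r θ)⁻¹ * (circleMap 0 r θ)⁻¹)) with hcdef
  have hcm : ∀ θ, circleMap 0 r θ ≠ 0 := fun θ => circleMap_ne_center hr0.ne'
  have hcabs : ∀ θ, ‖c θ‖ = (2*Real.pi)⁻¹ * r⁻¹ := by
    intro θ
    simp only [hcdef, deriv_circleMap, norm_mul, norm_inv,
      norm_circleMap_zero, Complex.norm_I, Complex.norm_two, Complex.norm_real, Real.norm_eq_abs,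
      abs_of_pos Real.pi_pos, abs_of_pos hr0]
    field_simp
  have hccont : Continuous c := by
    have h1 : Continuous fun θ => circleMap 0 r θ := continuous_circleMap 0 r
    simp only [hcdef, deriv_circleMap]
    exact continuous_const.mul ((h1.mul continuous_const).mul
      ((h1.inv₀ hcm).mul (h1.inv₀ hcm)))
  have hinner : ∀ θ : ℝ, Continuous fun x : E n => x + circleMap 0 r θ • v := fun θ =>
    continuous_id.add continuous_const
  have hpath : ∀ x : E n, Continuous fun θ : ℝ => x + circleMap 0 r θ • v := fun x =>
    continuous_const.add ((continuous_circleMap 0 r).smul continuous_const)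
  -- the Cauchy integral representation of the directional derivative
  have hrep : ∀ x ∈ closedBall z₀ δ,
      fderiv ℂ f x v = ∫ θ in (0:ℝ)..2*Real.pi, c θ * f (x + circleMap 0 r θ • v) := by
    intro x hx
    set φ : ℂ → ℂ := fun l => f (x + l • v) with hφ
    have hdφ : DifferentiableOn ℂ φ (closedBall 0 r) := by
      intro l hl
      rw [mem_closedBall, dist_zero_right] at hl
      exact ((hdAt _ (hsub (hgeo x hx l hl))).comp l
        ((differentiableAt_id.smul_const v).const_add x)).differentiableWithinAt
    have hp : HasFPowerSeriesOnBall φ (cauchyPowerSeries φ 0 r) 0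
        ((ENNReal.ofNNReal (⟨r, hr0.le⟩ : NNReal))) := by
      have h' : DifferentiableOn ℂ φ (closedBall 0 ((⟨r, hr0.le⟩ : NNReal) : ℝ)) := hdφ
      exact h'.hasFPowerSeriesOnBall (by exact_mod_cast hr0)
    have hder : HasDerivAt φ (fderiv ℂ f x v) 0 := by
      have hx' : x ∈ closedBall z₀ ε := closedBall_subset_closedBall (by linarith) hx
      have h0 : DifferentiableAt ℂ f (x + (0:ℂ) • v) := by simpa using hdAt x hx'
      have := slice_hasDerivAt (f := f) (y := x) (v := v) (l := 0) h0
      simpa using this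
    have hcoef : fderiv ℂ f x v = cauchyPowerSeries φ 0 r 1 (fun _ => 1) := by
      rw [← hder.deriv, hp.hasFPowerSeriesAt.deriv]
    rw [hcoef, cauchyPowerSeries_apply φ 0 r 1 1]
    rw [circleIntegral, ← intervalIntegral.integral_smul]
    refine intervalIntegral.integral_congr fun θ _ => ?_
    simp only [smul_eq_mul, sub_zero, pow_one, one_div, hcdef, hφ]
    ring
  -- differentiate under the integral sign
  set bnd : ℝ := (2*Real.pi)⁻¹ * r⁻¹ * (M / (ε/3)) with hbnd
  have key : HasFDerivAt
      (fun x => ∫ θ in (0:ℝ)..2*Real.pi, c θ * f (x + circleMap 0 r θ • v))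
      (∫ θ in (0:ℝ)..2*Real.pi, c θ • (fderiv ℂ f (z₀ + circleMap 0 r θ • v))) z₀ := by
    refine intervalIntegral.hasFDerivAt_integral_of_dominated_of_fderiv_le
      (𝕜 := ℂ) (μ := volume)
      (F := fun x θ => c θ * f (x + circleMap 0 r θ • v))
      (F' := fun x θ => c θ • (fderiv ℂ f (x + circleMap 0 r θ • v)))
      (bound := fun _ => bnd) (ball_mem_nhds z₀ hδ0) ?_ ?_ ?_ ?_ ?_ ?_
    · filter_upwards [ball_mem_nhds z₀ hδ0] with x hx
      have hc : Continuous fun θ : ℝ => c θ * f (x + circleMap 0 r θ • v) := by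
        refine hccont.mul ?_
        rw [continuous_iff_continuousAt]
        intro θ
        have hmemθ : x + circleMap 0 r θ • v ∈ closedBall z₀ ε := by
          refine hsub (hgeo x (ball_subset_closedBall hx) _ ?_)
          simp [norm_circleMap_zero, abs_of_pos hr0]
        exact ContinuousAt.comp (x := θ) (hdAt _ hmemθ).continuousAt (hpath x).continuousAt
      exact hc.aestronglyMeasurable
    · have hc : Continuous fun θ : ℝ => c θ * f (z₀ + circleMap 0 r θ • v) := by
        refine hccont.mul ?_
        rw [continuous_iff_continuousAt]
        intro θ
        have hmemθ : z₀ + circleMap 0 r θ • v ∈ closedBall z₀ ε := by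
          refine hsub (hgeo z₀ (mem_closedBall_self hδ0.le) _ ?_)
          simp [norm_circleMap_zero, abs_of_pos hr0]
        exact ContinuousAt.comp (x := θ) (hdAt _ hmemθ).continuousAt (hpath z₀).continuousAt
      exact hc.intervalIntegrable _ _
    · have m1 : Measurable fun θ : ℝ => fderiv ℂ f (z₀ + circleMap 0 r θ • v) :=
        (measurable_fderiv ℂ f).comp (hpath z₀).measurable
      exact (hccont.aestronglyMeasurable).smul m1.aestronglyMeasurable
    · refine Filter.Eventually.of_forall fun θ _ => fun x hx => ?_
      show ‖c θ • fderiv ℂ f (x + circleMap 0 r θ • v)‖ ≤ bnd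
      rw [norm_smul, hcabs θ, hbnd]
      have hmemθ : x + circleMap 0 r θ • v ∈ closedBall z₀ (2*(ε/3)) := by
        refine hgeo x (ball_subset_closedBall hx) _ ?_
        simp [norm_circleMap_zero, abs_of_pos hr0]
      have h2 := hfd _ hmemθ
      rw [mul_assoc]
      have hpos : (0:ℝ) ≤ (2 * Real.pi)⁻¹ * r⁻¹ := by positivity
      calc (2 * Real.pi)⁻¹ * (r⁻¹ * ‖fderiv ℂ f (x + circleMap 0 r θ • v)‖)
          = (2 * Real.pi)⁻¹ * r⁻¹ * ‖fderiv ℂ f (x + circleMap 0 r θ • v)‖ := by ring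
        _ ≤ (2 * Real.pi)⁻¹ * r⁻¹ * (M / (ε/3)) := mul_le_mul_of_nonneg_left h2 hpos
    · exact intervalIntegrable_const
    · refine Filter.Eventually.of_forall fun θ _ => fun x hx => ?_
      show HasFDerivAt (fun x => c θ * f (x + circleMap 0 r θ • v))
        (c θ • fderiv ℂ f (x + circleMap 0 r θ • v)) x
      have hmemθ : x + circleMap 0 r θ • v ∈ closedBall z₀ ε := by
        refine hsub (hgeo x (ball_subset_closedBall hx) _ ?_)
        simp [norm_circleMap_zero, abs_of_pos hr0]
      have hF : HasFDerivAt (fun x : E n => f (x + circleMap 0 r θ • v))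
          (fderiv ℂ f (x + circleMap 0 r θ • v)) x := by
        have h1 : HasFDerivAt (fun y : E n => y + circleMap 0 r θ • v)
            (ContinuousLinearMap.id ℂ (E n)) x := (hasFDerivAt_id x).add_const _
        have h2 := ((hdAt _ hmemθ).hasFDerivAt).comp x h1
        exact h2
      exact hF.const_mul (c θ)
  have hEq : (fun x => fderiv ℂ f x v) =ᶠ[nhds z₀]
      (fun x => ∫ θ in (0:ℝ)..2*Real.pi, c θ * f (x + circleMap 0 r θ • v)) := by
    filter_upwards [closedBall_mem_nhds z₀ hδ0] with x hx using hrep x hx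
  exact (key.congr_of_eventuallyEq hEq).differentiableAt

end lemA

section ball
variable {n : ℕ}

lemma smul_mem_uball {z : E n} (hz : z ∈ uball n) {t : ℝ} (ht : |t| ≤ 1) :
    t • z ∈ uball n := by
  rw [uball, mem_ball_zero_iff] at hz ⊢
  rw [norm_smul, Real.norm_eq_abs]
  calc |t| * ‖z‖ ≤ 1 * ‖z‖ := by
        refine mul_le_mul_of_nonneg_right ht (norm_nonneg z)
    _ < 1 := by rwa [one_mul]

lemma real_smul_eq (t : ℝ) (z : E n) : t • z = (t:ℂ) • z := by
  rw [← algebraMap_smul ℂ t z, Complex.coe_algebraMap]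

lemma cont_dirDeriv {u : E n → ℂ} (hu : DifferentiableOn ℂ u (uball n)) (v : E n) :
    ContinuousOn (fun z => fderiv ℂ u z v) (uball n) :=
  (dirDeriv_differentiableOn isOpen_ball hu v).continuousOn

lemma path_hasDerivAt {u : E n → ℂ} (hu : DifferentiableOn ℂ u (uball n)) {z : E n}
    (hz : z ∈ uball n) {t : ℝ} (ht : |t| ≤ 1) :
    HasDerivAt (fun s : ℝ => u (s • z)) (fderiv ℂ u (t • z) z) t := by
  have hmem : t • z ∈ uball n := smul_mem_uball hz ht
  have hin : HasDerivAt (fun s : ℝ => s • z) z t := by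
    simpa using (hasDerivAt_id t).smul_const z
  have hd : HasFDerivAt u ((fderiv ℂ u (t • z)).restrictScalars ℝ) (t • z) :=
    ((hu.differentiableAt (isOpen_ball.mem_nhds hmem)).hasFDerivAt).restrictScalars ℝ
  exact hd.comp_hasDerivAt t hin

lemma cont_path {u : E n → ℂ} (hu : DifferentiableOn ℂ u (uball n)) {z : E n}
    (hz : z ∈ uball n) :
    ContinuousOn (fun t : ℝ => fderiv ℂ u (t • z) z) (Set.uIcc (0:ℝ) 1) := by
  have h1 : ContinuousOn (fun t : ℝ => t • z) (Set.uIcc (0:ℝ) 1) :=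
    (continuous_id.smul continuous_const).continuousOn
  refine (cont_dirDeriv hu z).comp h1 ?_
  intro t ht
  rw [Set.uIcc_of_le (by norm_num : (0:ℝ) ≤ 1), Set.mem_Icc] at ht
  exact smul_mem_uball hz (by rw [abs_le]; constructor <;> linarith [ht.1, ht.2])

lemma radial_FTC {u : E n → ℂ} (hu : DifferentiableOn ℂ u (uball n)) {z : E n}
    (hz : z ∈ uball n) :
    u z - u 0 = ∫ t in (0:ℝ)..1, fderiv ℂ u (t • z) z := by
  have h := intervalIntegral.integral_eq_sub_of_hasDerivAt
    (f := fun s : ℝ => u (s • z)) (f' := fun t : ℝ => fderiv ℂ u (t • z) z)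
    (fun t ht => by
      refine path_hasDerivAt hu hz ?_
      rw [Set.uIcc_of_le (by norm_num : (0:ℝ) ≤ 1), Set.mem_Icc] at ht
      rw [abs_le]; constructor <;> linarith [ht.1, ht.2])
    ((cont_path hu hz).intervalIntegrable)
  rw [h]
  simp

end ball

section est
variable {n : ℕ}

lemma rad_diffOn {u : E n → ℂ} (hu : DifferentiableOn ℂ u (uball n)) :
    DifferentiableOn ℂ (rad n u) (uball n) := by
  have hco : ∀ j : Fin n, DifferentiableOn ℂ (fun z : E n => z j) (uball n) := fun j =>
    (EuclideanSpace.proj (𝕜 := ℂ) (ι := Fin n) j).differentiable.differentiableOn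
  exact DifferentiableOn.fun_sum fun j _ => (hco j).mul (dirDeriv_differentiableOn isOpen_ball hu _)

lemma zero_mem_uball : (0 : E n) ∈ uball n := by
  rw [uball]; exact mem_ball_self one_pos

lemma zero_mem_zygSet (f : E n → ℂ) : (0:ℝ) ∈ zygSet n f := by
  refine ⟨0, zero_mem_uball, ?_⟩
  rw [rad_zero]
  simp

lemma sSup_zyg_nonneg {f : E n → ℂ} (hb : BddAbove (zygSet n f)) :
    0 ≤ sSup (zygSet n f) := le_csSup hb (zero_mem_zygSet f)

lemma zyg_bound {f : E n → ℂ} (hb : BddAbove (zygSet n f)) {w : E n} (hw : w ∈ uball n) :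
    (1 - ‖w‖ ^ 2) * ‖rad n (rad n f) w‖ ≤ sSup (zygSet n f) :=
  le_csSup hb ⟨w, hw, rfl⟩

lemma pos_one_sub_sq {w : E n} (hw : w ∈ uball n) : 0 < 1 - ‖w‖ ^ 2 := by
  rw [uball, mem_ball_zero_iff] at hw
  nlinarith [norm_nonneg w]

lemma log_two_le_L {w : E n} (hw : w ∈ uball n) :
    Real.log 2 ≤ Real.log (2 / (1 - ‖w‖ ^ 2)) := by
  have h1 := pos_one_sub_sq hw
  have h2 : 1 - ‖w‖ ^ 2 ≤ 1 := by nlinarith [norm_nonneg w]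
  refine Real.log_le_log (by norm_num) ?_
  rw [le_div_iff₀ h1]
  linarith

end est

section logest
variable {n : ℕ}

lemma radf_log_bound {f : E n → ℂ} (hf : DifferentiableOn ℂ f (uball n))
    (hb : BddAbove (zygSet n f)) {z : E n} (hz : z ∈ uball n) :
    ‖rad n f z‖ ≤
      6 * sSup (zygSet n f) * Real.log (2 / (1 - ‖z‖ ^ 2)) := by
  set M := sSup (zygSet n f) with hMdef
  have hM0 : 0 ≤ M := sSup_zyg_nonneg hb
  set L := Real.log (2 / (1 - ‖z‖ ^ 2)) with hLdef
  have hL2 : Real.log 2 ≤ L := log_two_le_L hz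
  have hlog2 : (0.6931471803:ℝ) < Real.log 2 := Real.log_two_gt_d9
  have hL0 : 0 < L := lt_of_lt_of_le (by linarith) hL2
  rcases eq_or_ne z 0 with rfl | hz0
  · rw [rad_zero]
    simp only [norm_zero]
    positivity
  set a := ‖z‖ with hadef
  have ha0 : 0 < a := norm_pos_iff.2 hz0
  have ha1 : a < 1 := by rw [uball, mem_ball_zero_iff] at hz; exact hz
  set u := rad n f with hudef
  have hu : DifferentiableOn ℂ u (uball n) := rad_diffOn hf
  set ρ : ℝ → ℂ := fun t => fderiv ℂ u (t • z) z with hρdef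
  -- FTC
  have hFTC : rad n f z = ∫ t in (0:ℝ)..1, ρ t := by
    have h := radial_FTC hu hz
    have hu0 : u 0 = 0 := rad_zero f
    rw [hu0, sub_zero] at h
    exact h
  -- splitting
  have hint1 : IntervalIntegrable ρ volume 0 (1/2) := by
    refine ((cont_path hu hz).mono ?_).intervalIntegrable
    rw [Set.uIcc_of_le (by norm_num : (0:ℝ) ≤ 1/2), Set.uIcc_of_le (by norm_num : (0:ℝ) ≤ 1)]
    exact Set.Icc_subset_Icc le_rfl (by norm_num)
  have hint2 : IntervalIntegrable ρ volume (1/2) 1 := by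
    refine ((cont_path hu hz).mono ?_).intervalIntegrable
    rw [Set.uIcc_of_le (by norm_num : (1:ℝ)/2 ≤ 1), Set.uIcc_of_le (by norm_num : (0:ℝ) ≤ 1)]
    exact Set.Icc_subset_Icc (by norm_num) le_rfl
  have hsplit : (∫ t in (0:ℝ)..1, ρ t) =
      (∫ t in (0:ℝ)..(1/2), ρ t) + ∫ t in (1/2:ℝ)..1, ρ t :=
    (intervalIntegral.integral_add_adjacent_intervals hint1 hint2).symm
  -- bound on the small piece via the maximum principle
  set R : ℝ := 1 / (2 * a) with hRdef
  have hR0 : 0 < R := by positivity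
  have hRhalf : (1:ℝ)/2 < R := by
    rw [hRdef]
    rw [div_lt_div_iff₀ (by norm_num) (by positivity)]
    linarith
  have hRa : R * a = 1/2 := by rw [hRdef]; field_simp
  set V : ℂ → ℂ := fun l => fderiv ℂ u (l • z) z with hVdef
  have hmap : ∀ l : ℂ, l ∈ ball (0:ℂ) (1/a) → l • z ∈ uball n := by
    intro l hl
    rw [mem_ball_zero_iff] at hl
    rw [uball, mem_ball_zero_iff, norm_smul]
    calc ‖l‖ * ‖z‖ < (1/a) * a := mul_lt_mul_of_pos_right hl ha0
      _ = 1 := by field_simp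
  have hVd : DifferentiableOn ℂ V (ball (0:ℂ) (1/a)) := by
    intro l hl
    have hmem : l • z ∈ uball n := hmap l hl
    have h1 : DifferentiableAt ℂ (fun w : E n => fderiv ℂ u w z) (l • z) :=
      (dirDeriv_differentiableOn isOpen_ball hu z).differentiableAt
        (isOpen_ball.mem_nhds hmem)
    exact (h1.comp l (differentiableAt_id.smul_const z)).differentiableWithinAt
  have hRlt : R < 1/a := by
    rw [hRdef, div_lt_div_iff₀ (by positivity) ha0]
    linarith
  have hVbound : ∀ l ∈ closedBall (0:ℂ) R, ‖V l‖ ≤ 8/3 * M * a := by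
    intro l hl
    have hcl : closure (ball (0:ℂ) R) = closedBall (0:ℂ) R := closure_ball 0 hR0.ne'
    have hDCC : DiffContOnCl ℂ V (ball (0:ℂ) R) := by
      refine ⟨hVd.mono (ball_subset_ball hRlt.le), ?_⟩
      rw [hcl]
      exact (hVd.continuousOn).mono (closedBall_subset_ball hRlt)
    refine Complex.norm_le_of_forall_mem_frontier_norm_le isBounded_ball hDCC ?_
      (by rw [hcl]; exact hl)
    intro w hw
    rw [frontier_ball (0:ℂ) hR0.ne', mem_sphere_zero_iff_norm] at hw
    have hwz : ‖w • z‖ = 1/2 := by rw [norm_smul, hw, ← hadef, hRa]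
    have hmem : w • z ∈ uball n := by
      rw [uball, mem_ball_zero_iff, hwz]; norm_num
    have hkey : w * V w = rad n u (w • z) := by
      rw [rad_apply, (fderiv ℂ u (w • z)).map_smul, smul_eq_mul]
    have h1 : R * ‖V w‖ = ‖rad n u (w • z)‖ := by
      rw [← hkey, norm_mul, hw]
    have hzyg := zyg_bound hb hmem
    rw [hwz] at hzyg
    norm_num at hzyg
    -- hzyg : (3/4) * abs (rad (rad f) (w•z)) ≤ M  (shape may vary)
    have h2 : ‖rad n u (w • z)‖ ≤ 4/3 * M := by
      rw [hudef]
      nlinarith [norm_nonneg (rad n (rad n f) (w • z))]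
    nlinarith [norm_nonneg (V w), hR0, hRa]
  -- small piece
  have hsmall : ‖∫ t in (0:ℝ)..(1/2), ρ t‖ ≤ 4/3 * M * a := by
    have h := intervalIntegral.norm_integral_le_of_norm_le_const
      (C := 8/3 * M * a) (f := ρ) (a := 0) (b := 1/2) ?_
    · calc ‖∫ t in (0:ℝ)..(1/2), ρ t‖ ≤ 8/3 * M * a * |1/2 - 0| := h
        _ = 4/3 * M * a := by rw [show |(1:ℝ)/2 - 0| = 1/2 by norm_num]; ring
    · intro t ht
      rw [Set.uIoc_of_le (by norm_num : (0:ℝ) ≤ 1/2), Set.mem_Ioc] at ht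
      have hteq : ρ t = V ((t:ℝ):ℂ) := by
        simp only [hρdef, hVdef]
        rw [real_smul_eq]
      rw [hteq]
      refine hVbound _ ?_
      rw [mem_closedBall_zero_iff, Complex.norm_real, Real.norm_eq_abs,
        abs_of_pos ht.1]
      linarith [ht.2, hRhalf]
  -- big piece
  have htapos : ∀ t ∈ Set.Icc (1/2:ℝ) 1, 0 < 1 - t * a := by
    intro t ht
    rw [Set.mem_Icc] at ht
    nlinarith [ht.1, ht.2]
  have hρb : ∀ t ∈ Set.Ioc (1/2:ℝ) 1, ‖ρ t‖ ≤ 2 * M * (1 - t * a)⁻¹ := by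
    intro t ht
    rw [Set.mem_Ioc] at ht
    have ht0 : 0 < t := by linarith
    have hta : 0 < 1 - t * a := htapos t (Set.mem_Icc.2 ⟨ht.1.le, ht.2⟩)
    have hmem : t • z ∈ uball n := smul_mem_uball hz (by rw [abs_of_pos ht0]; exact ht.2)
    have hρc : ρ t = fderiv ℂ u ((t:ℂ) • z) z := by
      simp only [hρdef]
      rw [real_smul_eq]
    have hkey : (t:ℂ) * ρ t = rad n u (t • z) := by
      rw [rad_apply, real_smul_eq t z, (fderiv ℂ u ((t:ℂ) • z)).map_smul, smul_eq_mul, hρc]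
    have h1 : t * ‖ρ t‖ = ‖rad n u (t • z)‖ := by
      rw [← hkey, norm_mul,
        Complex.norm_real, Real.norm_eq_abs, abs_of_pos ht0]
    have hzyg := zyg_bound hb hmem
    have hnsm : ‖t • z‖ = t * a := by
      rw [norm_smul, Real.norm_eq_abs, abs_of_pos ht0, hadef]
    rw [hnsm] at hzyg
    rw [hudef] at h1
    have habs0 : 0 ≤ ‖rad n (rad n f) (t • z)‖ :=
      norm_nonneg _
    have hq : 1 - (t*a)^2 = (1 - t*a) * (1 + t*a) := by ring
    have hx : 0 ≤ t * a := by positivity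
    have hta1 : t * a < 1 := by nlinarith [ht.2, ha1, ht0]
    have hsq : 0 < 1 - (t*a)^2 := by nlinarith [hta1, hx]
    -- from hzyg : (1 - (t*a)^2) * abs ≤ M
    have habs : ‖rad n (rad n f) (t • z)‖ ≤ M / (1 - (t*a)^2) := by
      rw [le_div_iff₀ hsq]
      nlinarith
    -- ‖ρ t‖ = abs / t ≤ 2 M /(1-ta)
    have hρval : ‖ρ t‖ = ‖rad n (rad n f) (t • z)‖ / t := by
      rw [← h1]; field_simp
    rw [hρval]
    rw [div_le_iff₀ ht0]
    calc ‖rad n (rad n f) (t • z)‖ ≤ M / (1 - (t*a)^2) := habs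
      _ ≤ 2 * M * (1 - t * a)⁻¹ * t := by
          rw [div_le_iff₀ hsq]
          have h2M : 0 ≤ M := hM0
          have hinv : 0 < (1 - t*a)⁻¹ := by positivity
          have : 2 * M * (1 - t * a)⁻¹ * t * (1 - (t*a)^2)
              = 2 * M * t * ((1 - (t*a)^2) * (1 - t*a)⁻¹) := by ring
          rw [this, hq]
          rw [show (1 - t*a) * (1 + t*a) * (1-t*a)⁻¹ = (1+t*a) * ((1-t*a) * (1-t*a)⁻¹) by ring]
          rw [mul_inv_cancel₀ hta.ne', mul_one]
          have hstep : (0:ℝ) ≤ 2*t*(1+t*a) - 1 := by nlinarith [ht.1, hx]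
          nlinarith [mul_nonneg hM0 hstep]
  have hbigint : IntervalIntegrable (fun t : ℝ => 2 * M * (1 - t * a)⁻¹) volume (1/2) 1 := by
    refine ContinuousOn.intervalIntegrable ?_
    rw [Set.uIcc_of_le (by norm_num : (1:ℝ)/2 ≤ 1)]
    refine continuous_const.continuousOn.mul (ContinuousOn.inv₀ ?_ ?_)
    · exact (continuous_const.sub (continuous_id.mul continuous_const)).continuousOn
    · intro t ht
      exact (htapos t ht).ne'
  have hbig : ‖∫ t in (1/2:ℝ)..1, ρ t‖ ≤ ∫ t in (1/2:ℝ)..1, 2 * M * (1 - t * a)⁻¹ := by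
    have hb1 := intervalIntegral.norm_integral_le_of_norm_le (μ := volume)
      (f := ρ) (a := 1/2) (b := 1) (g := fun t => 2 * M * (1 - t * a)⁻¹)
      (by norm_num) (Filter.Eventually.of_forall fun t ht => by
        exact hρb t ht) hbigint
    have hpos : 0 ≤ ∫ t in (1/2:ℝ)..1, 2 * M * (1 - t * a)⁻¹ := by
      refine intervalIntegral.integral_nonneg (by norm_num) ?_
      intro t ht
      rw [Set.mem_Icc] at ht
      have := htapos t (Set.mem_Icc.2 ht)
      positivity
    exact hb1
  -- evaluate/bound the integral
  have hIle : (∫ t in (1/2:ℝ)..1, (1 - t * a)⁻¹) ≤ 2 * L := by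
    rcases le_or_gt (1/2:ℝ) a with hc | hc
    · -- exact computation
      have hFder : ∀ t ∈ Set.uIcc (1/2:ℝ) 1,
          HasDerivAt (fun t : ℝ => -a⁻¹ * Real.log (1 - t * a)) ((1 - t * a)⁻¹) t := by
        intro t ht
        rw [Set.uIcc_of_le (by norm_num : (1:ℝ)/2 ≤ 1)] at ht
        have hta : 0 < 1 - t * a := htapos t ht
        have hinner : HasDerivAt (fun t : ℝ => 1 - t * a) (-a) t := by
          simpa using ((hasDerivAt_id t).mul_const a).const_sub 1
        have hlog := (Real.hasDerivAt_log hta.ne').comp t hinner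
        have := hlog.const_mul (-a⁻¹)
        refine this.congr_deriv ?_
        field_simp
      have hIval := intervalIntegral.integral_eq_sub_of_hasDerivAt hFder
        (by
          refine ContinuousOn.intervalIntegrable ?_
          rw [Set.uIcc_of_le (by norm_num : (1:ℝ)/2 ≤ 1)]
          refine ContinuousOn.inv₀ ?_ ?_
          · exact (continuous_const.sub (continuous_id.mul continuous_const)).continuousOn
          · intro t ht
            exact (htapos t ht).ne')
      rw [hIval]
      have h1a : 0 < 1 - a := by linarith
      have h12a : 0 < 1 - (1/2) * a := by nlinarith
      have hd0 : Real.log (1 - a) ≤ Real.log (1 - (1/2) * a) :=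
        Real.log_le_log h1a (by linarith)
      have hne1 : Real.log (1 - 1 * a) = Real.log (1 - a) := by norm_num
      have hl2 : Real.log (1 - (1/2) * a) ≤ 0 :=
        Real.log_nonpos (by linarith) (by linarith)
      have hl3 : -Real.log (1 - a) ≤ L := by
        rw [← Real.log_inv]
        refine Real.log_le_log (by positivity) ?_
        rw [hLdef] at *
        rw [inv_eq_one_div, div_le_div_iff₀ h1a (by nlinarith)]
        nlinarith
      have ha2 : a⁻¹ ≤ 2 := by
        rw [inv_eq_one_div, div_le_iff₀ ha0]
        linarith
      -- value = -a⁻¹ log(1-a) + a⁻¹ log(1-a/2)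
      have hval : -a⁻¹ * Real.log (1 - 1 * a) - -a⁻¹ * Real.log (1 - 1/2 * a)
          = a⁻¹ * (Real.log (1 - 1/2 * a) - Real.log (1 - a)) := by
        rw [hne1]; ring
      rw [hval]
      have hdpos : 0 ≤ Real.log (1 - 1/2 * a) - Real.log (1 - a) := by linarith
      calc a⁻¹ * (Real.log (1 - 1/2 * a) - Real.log (1 - a))
          ≤ 2 * (Real.log (1 - 1/2 * a) - Real.log (1 - a)) :=
            mul_le_mul_of_nonneg_right ha2 hdpos
        _ ≤ 2 * (-Real.log (1 - a)) := by nlinarith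
        _ ≤ 2 * L := by nlinarith
    · -- a small : integrand ≤ 2
      have h2 : (∫ t in (1/2:ℝ)..1, (1 - t * a)⁻¹) ≤ ∫ _t in (1/2:ℝ)..1, (2:ℝ) := by
        refine intervalIntegral.integral_mono_on (by norm_num) ?_ intervalIntegrable_const ?_
        · refine ContinuousOn.intervalIntegrable ?_
          rw [Set.uIcc_of_le (by norm_num : (1:ℝ)/2 ≤ 1)]
          refine ContinuousOn.inv₀ ?_ ?_
          · exact (continuous_const.sub (continuous_id.mul continuous_const)).continuousOn
          · intro t ht
            exact (htapos t ht).ne'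
        · intro t ht
          rw [Set.mem_Icc] at ht
          have hta : 0 < 1 - t * a := htapos t (Set.mem_Icc.2 ht)
          have hhalf : (1:ℝ)/2 ≤ 1 - t * a := by nlinarith [ht.1, ht.2]
          calc (1 - t * a)⁻¹ ≤ ((1:ℝ)/2)⁻¹ := by
                exact inv_anti₀ (by norm_num) hhalf
            _ = 2 := by norm_num
      calc (∫ t in (1/2:ℝ)..1, (1 - t * a)⁻¹) ≤ ∫ _t in (1/2:ℝ)..1, (2:ℝ) := h2
        _ = 1 := by
            rw [intervalIntegral.integral_const, smul_eq_mul]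
            norm_num
        _ ≤ 2 * L := by nlinarith [hL2, hlog2]
  -- assemble
  have hbig2 : (∫ t in (1/2:ℝ)..1, 2 * M * (1 - t * a)⁻¹) ≤ 4 * M * L := by
    rw [intervalIntegral.integral_const_mul]
    calc 2 * M * ∫ t in (1/2:ℝ)..1, (1 - t * a)⁻¹ ≤ 2 * M * (2 * L) := by
          refine mul_le_mul_of_nonneg_left hIle (by positivity)
      _ = 4 * M * L := by ring
  have habs : ‖rad n f z‖ = ‖∫ t in (0:ℝ)..1, ρ t‖ := by
    rw [hFTC]
  rw [habs, hsplit]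
  calc ‖(∫ t in (0:ℝ)..(1/2), ρ t) + ∫ t in (1/2:ℝ)..1, ρ t‖
      ≤ ‖∫ t in (0:ℝ)..(1/2), ρ t‖ + ‖∫ t in (1/2:ℝ)..1, ρ t‖ := norm_add_le _ _
    _ ≤ 4/3 * M * a + 4 * M * L := add_le_add hsmall (hbig.trans hbig2)
    _ ≤ 6 * M * L := by nlinarith [hL2, hlog2, ha1, hM0, ha0]

end logest

section ig
variable {n : ℕ}

lemma proj_norm_le (j : Fin n) : ‖(EuclideanSpace.proj (𝕜 := ℂ) (ι := Fin n) j)‖ ≤ 1 := by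
  refine ContinuousLinearMap.opNorm_le_bound _ zero_le_one (fun v => ?_)
  rw [one_mul]
  exact (coord_norm_le v j).trans_eq' (by rfl)

lemma clm_decomp (A : (E n) →L[ℂ] ℂ) :
    A = ∑ k, A (EuclideanSpace.single k 1) • (EuclideanSpace.proj (𝕜 := ℂ) k) := by
  ext v
  rw [clm_apply_eq A v]
  rw [ContinuousLinearMap.sum_apply]
  refine Finset.sum_congr rfl fun k _ => ?_
  rw [ContinuousLinearMap.smul_apply, smul_eq_mul]
  rw [mul_comm]
  rfl

lemma clm_norm_le_sum (A : (E n) →L[ℂ] ℂ) :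
    ‖A‖ ≤ ∑ k, ‖A (EuclideanSpace.single k 1)‖ := by
  conv_lhs => rw [clm_decomp A]
  refine (norm_sum_le _ _).trans ?_
  refine Finset.sum_le_sum fun k _ => ?_
  refine (norm_smul_le (A (EuclideanSpace.single k 1))
    (EuclideanSpace.proj (𝕜 := ℂ) k)).trans ?_
  calc ‖A (EuclideanSpace.single k 1)‖ * ‖EuclideanSpace.proj (𝕜 := ℂ) k‖
      ≤ ‖A (EuclideanSpace.single k 1)‖ * 1 :=
        mul_le_mul_of_nonneg_left (proj_norm_le k) (norm_nonneg _)
    _ = ‖A (EuclideanSpace.single k 1)‖ := by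
        rw [mul_one]

lemma mem_uball_of_Icc {z : E n} (hz : z ∈ uball n) {t : ℝ} (ht : t ∈ Set.Icc (0:ℝ) 1) :
    t • z ∈ uball n := by
  rw [Set.mem_Icc] at ht
  exact smul_mem_uball hz (by rw [abs_le]; constructor <;> linarith [ht.1, ht.2])

lemma cont_path_dir {u : E n → ℂ} (hu : DifferentiableOn ℂ u (uball n)) {z : E n}
    (hz : z ∈ uball n) (v : E n) :
    ContinuousOn (fun t : ℝ => fderiv ℂ u (t • z) v) (Set.Icc (0:ℝ) 1) := by
  refine (cont_dirDeriv hu v).comp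
    ((continuous_id.smul continuous_const).continuousOn) ?_
  intro t ht
  exact mem_uball_of_Icc hz ht

lemma cont_path_fn {u : E n → ℂ} (hu : DifferentiableOn ℂ u (uball n)) {z : E n}
    (hz : z ∈ uball n) :
    ContinuousOn (fun t : ℝ => u (t • z)) (Set.Icc (0:ℝ) 1) := by
  refine (hu.continuousOn).comp
    ((continuous_id.smul continuous_const).continuousOn) ?_
  intro t ht
  exact mem_uball_of_Icc hz ht

lemma smul_hasFDerivAt (t : ℝ) (x : E n) :
    HasFDerivAt (fun z' : E n => t • z')
      ((t:ℂ) • ContinuousLinearMap.id ℂ (E n)) x := by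
  have h : (fun z' : E n => t • z') =
      fun z' => ((t:ℂ) • ContinuousLinearMap.id ℂ (E n)) z' := by
    funext z'
    rw [ContinuousLinearMap.smul_apply, ContinuousLinearMap.id_apply, real_smul_eq]
  rw [h]
  exact ContinuousLinearMap.hasFDerivAt _

/-- The integrand of `Ig` (with the `1/t` singularity cancelled). -/
def qfun (n : ℕ) (f g : E n → ℂ) (t : ℝ) (z : E n) : ℂ :=
  ∑ j, (z j * fderiv ℂ f (t • z) (EuclideanSpace.single j 1)) * g (t • z)

/-- The `z`-derivative of `qfun`. -/
def Dfun (n : ℕ) (f g : E n → ℂ) (t : ℝ) (z : E n) : (E n) →L[ℂ] ℂ :=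
  ∑ j, ((z j * fderiv ℂ f (t • z) (EuclideanSpace.single j 1)) •
          ((t:ℂ) • fderiv ℂ g (t • z))
    + g (t • z) • ((z j) • ((t:ℂ) •
          fderiv ℂ (fun w => fderiv ℂ f w (EuclideanSpace.single j 1)) (t • z))
      + (fderiv ℂ f (t • z) (EuclideanSpace.single j 1)) •
          (EuclideanSpace.proj (𝕜 := ℂ) j)))

lemma qfun_eq (f g : E n → ℂ) (t : ℝ) (z : E n) :
    qfun n f g t z = fderiv ℂ f (t • z) z * g (t • z) := by
  rw [qfun, clm_apply_eq (fderiv ℂ f (t • z)) z, Finset.sum_mul]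

lemma qfun_hasFDerivAt {f g : E n → ℂ} (hf : DifferentiableOn ℂ f (uball n))
    (hg : DifferentiableOn ℂ g (uball n)) {t : ℝ} (ht : t ∈ Set.Icc (0:ℝ) 1)
    {x : E n} (hx : x ∈ uball n) :
    HasFDerivAt (fun z' => qfun n f g t z') (Dfun n f g t x) x := by
  have htx : t • x ∈ uball n := mem_uball_of_Icc hx ht
  have hsm := smul_hasFDerivAt t x
  refine HasFDerivAt.fun_sum fun j _ => ?_
  have hproj : HasFDerivAt (fun z' : E n => z' j)
      (EuclideanSpace.proj (𝕜 := ℂ) j) x :=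
    (EuclideanSpace.proj (𝕜 := ℂ) (ι := Fin n) j).hasFDerivAt
  have hfj : HasFDerivAt
      (fun z' : E n => fderiv ℂ f (t • z') (EuclideanSpace.single j 1))
      (((t:ℂ) • fderiv ℂ (fun w => fderiv ℂ f w (EuclideanSpace.single j 1)) (t • x))) x := by
    have houter : HasFDerivAt (fun w => fderiv ℂ f w (EuclideanSpace.single j 1))
        (fderiv ℂ (fun w => fderiv ℂ f w (EuclideanSpace.single j 1)) (t • x)) (t • x) :=
      ((dirDeriv_differentiableOn isOpen_ball hf _).differentiableAt
        (isOpen_ball.mem_nhds htx)).hasFDerivAt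
    have h := houter.comp x hsm
    have hcomp : (fderiv ℂ (fun w => fderiv ℂ f w (EuclideanSpace.single j 1)) (t • x)).comp
        ((t:ℂ) • ContinuousLinearMap.id ℂ (E n))
        = (t:ℂ) • fderiv ℂ (fun w => fderiv ℂ f w (EuclideanSpace.single j 1)) (t • x) := by
      ext v
      simp
    rwa [hcomp] at h
  have hgc : HasFDerivAt (fun z' : E n => g (t • z'))
      ((t:ℂ) • fderiv ℂ g (t • x)) x := by
    have houter : HasFDerivAt g (fderiv ℂ g (t • x)) (t • x) :=
      (hg.differentiableAt (isOpen_ball.mem_nhds htx)).hasFDerivAt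
    have h := houter.comp x hsm
    have hcomp : (fderiv ℂ g (t • x)).comp ((t:ℂ) • ContinuousLinearMap.id ℂ (E n))
        = (t:ℂ) • fderiv ℂ g (t • x) := by
      ext v
      simp
    rwa [hcomp] at h
  exact (hproj.mul hfj).mul hgc

end ig

section ig2
variable {n : ℕ}

lemma cont_clm_path {u : E n → ℂ} (hu : DifferentiableOn ℂ u (uball n)) {z : E n}
    (hz : z ∈ uball n) :
    ContinuousOn (fun t : ℝ => fderiv ℂ u (t • z)) (Set.Icc (0:ℝ) 1) := by
  have hdec : (fun t : ℝ => fderiv ℂ u (t • z)) = fun t : ℝ =>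
      ∑ k, (fderiv ℂ u (t • z) (EuclideanSpace.single k 1)) •
        (EuclideanSpace.proj (𝕜 := ℂ) k) := funext fun t => clm_decomp _
  rw [hdec]
  refine continuousOn_finset_sum _ fun k _ => ?_
  exact (cont_path_dir hu hz _).smul continuousOn_const

lemma Dfun_contOn {f g : E n → ℂ} (hf : DifferentiableOn ℂ f (uball n))
    (hg : DifferentiableOn ℂ g (uball n)) {z : E n} (hz : z ∈ uball n) :
    ContinuousOn (fun t : ℝ => Dfun n f g t z) (Set.Icc (0:ℝ) 1) := by
  refine continuousOn_finset_sum _ fun j _ => ?_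
  refine ContinuousOn.add ?_ ?_
  · refine ContinuousOn.fun_smul ?_ ?_
    · exact continuousOn_const.mul (cont_path_dir hf hz _)
    · exact (Complex.continuous_ofReal.continuousOn).fun_smul (cont_clm_path hg hz)
  · refine ContinuousOn.fun_smul (cont_path_fn hg hz) ?_
    refine ContinuousOn.add ?_ ?_
    · refine continuousOn_const.fun_smul ?_
      exact (Complex.continuous_ofReal.continuousOn).fun_smul
        (cont_clm_path (dirDeriv_differentiableOn isOpen_ball hf _) hz)
    · exact (cont_path_dir hf hz _).fun_smul continuousOn_const

lemma qfun_contOn {f g : E n → ℂ} (hf : DifferentiableOn ℂ f (uball n))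
    (hg : DifferentiableOn ℂ g (uball n)) {z : E n} (hz : z ∈ uball n) :
    ContinuousOn (fun t : ℝ => qfun n f g t z) (Set.Icc (0:ℝ) 1) := by
  refine continuousOn_finset_sum _ fun j _ => ?_
  exact (continuousOn_const.mul (cont_path_dir hf hz _)).mul (cont_path_fn hg hz)

lemma tq_hasDerivAt {f g : E n → ℂ} (hf : DifferentiableOn ℂ f (uball n))
    (hg : DifferentiableOn ℂ g (uball n)) {x : E n} (hx : x ∈ uball n)
    {t : ℝ} (ht : t ∈ Set.Icc (0:ℝ) 1) :
    HasDerivAt (fun s : ℝ => (s:ℂ) * qfun n f g s x) (Dfun n f g t x x) t := by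
  rw [Set.mem_Icc] at ht
  have htabs : |t| ≤ 1 := by rw [abs_le]; constructor <;> linarith [ht.1, ht.2]
  have hc1 : HasDerivAt (fun s : ℝ => (s:ℂ)) 1 t := by
    exact Complex.ofRealCLM.hasDerivAt (x := t)
  have hrw : (fun s : ℝ => (s:ℂ) * qfun n f g s x) = fun s : ℝ =>
      ∑ j, (s:ℂ) * ((x j * fderiv ℂ f (s • x) (EuclideanSpace.single j 1)) * g (s • x)) := by
    funext s
    rw [qfun, Finset.mul_sum]
  rw [hrw]
  have hterm : ∀ j : Fin n, HasDerivAt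
      (fun s : ℝ => (s:ℂ) * ((x j * fderiv ℂ f (s • x) (EuclideanSpace.single j 1)) * g (s • x)))
      (1 * ((x j * fderiv ℂ f (t • x) (EuclideanSpace.single j 1)) * g (t • x))
        + (t:ℂ) * ((x j * fderiv ℂ (fun w => fderiv ℂ f w (EuclideanSpace.single j 1)) (t • x) x)
            * g (t • x)
          + (x j * fderiv ℂ f (t • x) (EuclideanSpace.single j 1)) * fderiv ℂ g (t • x) x)) t := by
    intro j
    have hφ : HasDerivAt (fun s : ℝ => fderiv ℂ f (s • x) (EuclideanSpace.single j 1))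
        (fderiv ℂ (fun w => fderiv ℂ f w (EuclideanSpace.single j 1)) (t • x) x) t :=
      path_hasDerivAt (dirDeriv_differentiableOn isOpen_ball hf _) hx htabs
    have hgd : HasDerivAt (fun s : ℝ => g (s • x)) (fderiv ℂ g (t • x) x) t :=
      path_hasDerivAt hg hx htabs
    have hin1 := hφ.const_mul (x j)
    have hin2 := hin1.mul hgd
    have := hc1.mul hin2
    exact this.congr_deriv (by simp only [Pi.mul_apply])
  have hsum := HasDerivAt.fun_sum (fun j (_ : j ∈ Finset.univ) => hterm j)
  refine hsum.congr_deriv (Eq.symm ?_)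
  rw [Dfun, ContinuousLinearMap.sum_apply]
  refine Finset.sum_congr rfl fun j _ => ?_
  have hproj : (EuclideanSpace.proj (𝕜 := ℂ) j) x = x j := rfl
  simp only [ContinuousLinearMap.add_apply, ContinuousLinearMap.smul_apply, smul_eq_mul, hproj]
  ring

lemma int_D_apply {f g : E n → ℂ} (hf : DifferentiableOn ℂ f (uball n))
    (hg : DifferentiableOn ℂ g (uball n)) {x : E n} (hx : x ∈ uball n) :
    (∫ t in (0:ℝ)..1, Dfun n f g t x x) = qfun n f g 1 x := by
  have hcont : ContinuousOn (fun t : ℝ => Dfun n f g t x x) (Set.Icc (0:ℝ) 1) := by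
    have happly : Continuous fun A : (E n) →L[ℂ] ℂ => A x :=
      (ContinuousLinearMap.apply ℂ ℂ x).continuous
    exact happly.comp_continuousOn (Dfun_contOn hf hg hx)
  have h := intervalIntegral.integral_eq_sub_of_hasDerivAt
    (f := fun s : ℝ => (s:ℂ) * qfun n f g s x)
    (f' := fun t : ℝ => Dfun n f g t x x)
    (fun t ht => tq_hasDerivAt hf hg hx (by
      rwa [Set.uIcc_of_le (by norm_num : (0:ℝ) ≤ 1)] at ht))
    (by
      refine ContinuousOn.intervalIntegrable ?_
      rwa [Set.uIcc_of_le (by norm_num : (0:ℝ) ≤ 1)])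
  rw [h]
  simp

end ig2

section ig3
variable {n : ℕ}

lemma cont_clm_on {u : E n → ℂ} (hu : DifferentiableOn ℂ u (uball n)) :
    ContinuousOn (fun w => fderiv ℂ u w) (uball n) := by
  have hdec : (fun w : E n => fderiv ℂ u w) = fun w =>
      ∑ k, (fderiv ℂ u w (EuclideanSpace.single k 1)) •
        (EuclideanSpace.proj (𝕜 := ℂ) k) := funext fun w => clm_decomp _
  rw [hdec]
  exact continuousOn_finset_sum _ fun k _ =>
    (cont_dirDeriv hu _).smul continuousOn_const

lemma norm_single_one (j : Fin n) : ‖(EuclideanSpace.single j (1:ℂ) : E n)‖ = 1 := by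
  rw [EuclideanSpace.norm_single]
  simp

lemma Dfun_bound {f g : E n → ℂ} (hf : DifferentiableOn ℂ f (uball n))
    (hg : DifferentiableOn ℂ g (uball n)) {z₀ : E n} (hz₀ : z₀ ∈ uball n) :
    ∃ C : ℝ, ∀ t ∈ Set.Icc (0:ℝ) 1, ∀ x ∈ closedBall (0:E n) ((1 + ‖z₀‖)/2),
      ‖Dfun n f g t x‖ ≤ C := by
  have hz1 : ‖z₀‖ < 1 := by rwa [uball, mem_ball_zero_iff] at hz₀
  set ρ : ℝ := (1 + ‖z₀‖)/2 with hρdef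
  have hρ0 : 0 < ρ := by positivity
  have hρ1 : ρ < 1 := by rw [hρdef]; linarith
  have hK : closedBall (0:E n) ρ ⊆ uball n := by
    intro w hw
    rw [mem_closedBall_zero_iff] at hw
    rw [uball, mem_ball_zero_iff]
    linarith
  have hcomp : IsCompact (closedBall (0:E n) ρ) := isCompact_closedBall _ _
  obtain ⟨Cg, hCg⟩ := hcomp.exists_bound_of_continuousOn (hg.continuousOn.mono hK)
  obtain ⟨Cg', hCg'⟩ := hcomp.exists_bound_of_continuousOn ((cont_clm_on hg).mono hK)
  obtain ⟨Cf', hCf'⟩ := hcomp.exists_bound_of_continuousOn ((cont_clm_on hf).mono hK)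
  have hchoice : ∀ j : Fin n, ∃ Cj : ℝ, ∀ w ∈ closedBall (0:E n) ρ,
      ‖fderiv ℂ (fun w => fderiv ℂ f w (EuclideanSpace.single j 1)) w‖ ≤ Cj := fun j =>
    hcomp.exists_bound_of_continuousOn
      ((cont_clm_on (dirDeriv_differentiableOn isOpen_ball hf _)).mono hK)
  choose Cj hCj using hchoice
  have h0K : (0:E n) ∈ closedBall (0:E n) ρ := mem_closedBall_self hρ0.le
  have hCg0 : 0 ≤ Cg := le_trans (norm_nonneg _) (hCg 0 h0K)
  have hCg'0 : 0 ≤ Cg' := le_trans (norm_nonneg _) (hCg' 0 h0K)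
  have hCf'0 : 0 ≤ Cf' := le_trans (norm_nonneg _) (hCf' 0 h0K)
  have hCj0 : ∀ j, 0 ≤ Cj j := fun j => le_trans (norm_nonneg _) (hCj j 0 h0K)
  refine ⟨∑ _j : Fin n, (Cf' * Cg' + Cg * (Cj _j + Cf')), ?_⟩
  intro t ht x hx
  rw [Set.mem_Icc] at ht
  have hxn : ‖x‖ ≤ ρ := by rwa [mem_closedBall_zero_iff] at hx
  have htx : t • x ∈ closedBall (0:E n) ρ := by
    rw [mem_closedBall_zero_iff, norm_smul, Real.norm_eq_abs,
      abs_of_nonneg ht.1]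
    calc t * ‖x‖ ≤ 1 * ρ := by
          refine mul_le_mul ht.2 hxn (norm_nonneg x) zero_le_one
      _ = ρ := one_mul ρ
  have hxj : ∀ j : Fin n, ‖x j‖ ≤ 1 :=
    fun j => (coord_norm_le x j).trans (hxn.trans hρ1.le)
  have hφj : ∀ j : Fin n, ‖fderiv ℂ f (t • x) (EuclideanSpace.single j 1)‖ ≤ Cf' := by
    intro j
    calc ‖fderiv ℂ f (t • x) (EuclideanSpace.single j 1)‖
        ≤ ‖fderiv ℂ f (t • x)‖ * ‖(EuclideanSpace.single j (1:ℂ) : E n)‖ :=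
          (fderiv ℂ f (t • x)).le_opNorm _
      _ = ‖fderiv ℂ f (t • x)‖ := by rw [norm_single_one, mul_one]
      _ ≤ Cf' := hCf' _ htx
  have htc : ‖((t:ℝ):ℂ)‖ ≤ 1 := by
    rw [Complex.norm_real, Real.norm_eq_abs, abs_of_nonneg ht.1]
    exact ht.2
  rw [Dfun]
  refine (norm_sum_le _ _).trans ?_
  refine Finset.sum_le_sum fun j _ => ?_
  refine (norm_add_le _ _).trans ?_
  have hA : ‖(x j * fderiv ℂ f (t • x) (EuclideanSpace.single j 1)) •
      ((t:ℂ) • fderiv ℂ g (t • x))‖ ≤ Cf' * Cg' := by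
    refine (norm_smul_le (α := ℂ) (β := E n →L[ℂ] ℂ) _ _).trans ?_
    have h1 : ‖x j * fderiv ℂ f (t • x) (EuclideanSpace.single j 1)‖ ≤ Cf' := by
      rw [norm_mul]
      calc ‖x j‖ * ‖fderiv ℂ f (t • x) (EuclideanSpace.single j 1)‖
          ≤ 1 * Cf' := by
            refine mul_le_mul ?_ ?_ (norm_nonneg _) zero_le_one
            · exact hxj j
            · exact hφj j
        _ = Cf' := one_mul _
    have h2 : ‖(t:ℂ) • fderiv ℂ g (t • x)‖ ≤ Cg' := by
      refine (norm_smul_le (α := ℂ) (β := E n →L[ℂ] ℂ) _ _).trans ?_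
      calc ‖((t:ℝ):ℂ)‖ * ‖fderiv ℂ g (t • x)‖ ≤ 1 * Cg' :=
            mul_le_mul htc (hCg' _ htx) (norm_nonneg _) zero_le_one
        _ = Cg' := one_mul _
    exact mul_le_mul h1 h2 (norm_nonneg _) hCf'0
  have hB : ‖g (t • x) • ((x j) • ((t:ℂ) •
      fderiv ℂ (fun w => fderiv ℂ f w (EuclideanSpace.single j 1)) (t • x))
      + (fderiv ℂ f (t • x) (EuclideanSpace.single j 1)) •
          (EuclideanSpace.proj (𝕜 := ℂ) j))‖ ≤ Cg * (Cj j + Cf') := by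
    refine (norm_smul_le (α := ℂ) (β := E n →L[ℂ] ℂ) _ _).trans ?_
    refine mul_le_mul (hCg _ htx) ?_ (norm_nonneg _) hCg0
    refine (norm_add_le _ _).trans ?_
    refine add_le_add ?_ ?_
    · refine (norm_smul_le (α := ℂ) (β := E n →L[ℂ] ℂ) _ _).trans ?_
      calc ‖x j‖ * ‖(t:ℂ) • fderiv ℂ (fun w => fderiv ℂ f w
            (EuclideanSpace.single j 1)) (t • x)‖
          ≤ 1 * (Cj j) := by
            refine mul_le_mul ?_ ?_ (norm_nonneg _) zero_le_one
            · exact hxj j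
            · refine (norm_smul_le (α := ℂ) (β := E n →L[ℂ] ℂ) _ _).trans ?_
              calc ‖((t:ℝ):ℂ)‖ * ‖fderiv ℂ (fun w => fderiv ℂ f w
                    (EuclideanSpace.single j 1)) (t • x)‖
                  ≤ 1 * (Cj j) := mul_le_mul htc (hCj j _ htx) (norm_nonneg _) zero_le_one
                _ = Cj j := one_mul _
        _ = Cj j := one_mul _
    · refine (norm_smul_le (α := ℂ) (β := E n →L[ℂ] ℂ) _ _).trans ?_
      calc ‖fderiv ℂ f (t • x) (EuclideanSpace.single j 1)‖ *
            ‖EuclideanSpace.proj (𝕜 := ℂ) (ι := Fin n) j‖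
          ≤ Cf' * 1 := by
            refine mul_le_mul ?_ (proj_norm_le j) (norm_nonneg _) hCf'0
            exact hφj j
        _ = Cf' := mul_one _
  exact add_le_add hA hB

end ig3

section ig4
variable {n : ℕ}

lemma Ig_eq_q {f g : E n → ℂ} {z : E n} (hz : z ∈ uball n) :
    Ig n g f z = ∫ t in (0:ℝ)..1, qfun n f g t z := by
  rw [Ig]
  refine intervalIntegral.integral_congr_ae ?_
  refine Filter.Eventually.of_forall fun t ht => ?_
  rw [Set.uIoc_of_le (zero_le_one (α := ℝ)), Set.mem_Ioc] at ht
  have ht0 : ((t:ℝ):ℂ) ≠ 0 := Complex.ofReal_ne_zero.2 (ne_of_gt ht.1)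
  have h1 : rad n f (t • z) = (t:ℂ) * fderiv ℂ f (t • z) z := by
    rw [rad_apply]
    nth_rewrite 2 [real_smul_eq t z]
    rw [(fderiv ℂ f (t • z)).map_smul, smul_eq_mul]
  rw [h1, qfun_eq]
  rw [div_eq_iff ht0]
  ring

lemma Ig_deriv {f g : E n → ℂ} (hf : DifferentiableOn ℂ f (uball n))
    (hg : DifferentiableOn ℂ g (uball n)) {z₀ : E n} (hz₀ : z₀ ∈ uball n) :
    HasFDerivAt (Ig n g f) (∫ t in (0:ℝ)..1, Dfun n f g t z₀) z₀ ∧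
      rad n (Ig n g f) z₀ = rad n f z₀ * g z₀ := by
  have hz1 : ‖z₀‖ < 1 := by rwa [uball, mem_ball_zero_iff] at hz₀
  set ε : ℝ := (1 - ‖z₀‖)/2 with hεdef
  have hε0 : 0 < ε := by rw [hεdef]; linarith
  set ρ : ℝ := (1 + ‖z₀‖)/2 with hρdef
  have hρ1 : ρ < 1 := by rw [hρdef]; linarith
  have hsub : ball z₀ ε ⊆ closedBall (0:E n) ρ := by
    intro x hx
    rw [mem_ball] at hx
    rw [mem_closedBall_zero_iff]
    calc ‖x‖ = ‖x - z₀ + z₀‖ := by rw [sub_add_cancel]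
      _ ≤ ‖x - z₀‖ + ‖z₀‖ := norm_add_le _ _
      _ ≤ ε + ‖z₀‖ := by
          refine add_le_add ?_ le_rfl
          rw [← dist_eq_norm]
          exact hx.le
      _ ≤ ρ := by rw [hεdef, hρdef]; linarith
  have hsub2 : ∀ x ∈ ball z₀ ε, x ∈ uball n := by
    intro x hx
    have := hsub hx
    rw [mem_closedBall_zero_iff] at this
    rw [uball, mem_ball_zero_iff]
    linarith
  have hIoc : Set.uIoc (0:ℝ) 1 = Set.Ioc 0 1 := Set.uIoc_of_le zero_le_one
  have hIcc : Set.uIcc (0:ℝ) 1 = Set.Icc 0 1 := Set.uIcc_of_le zero_le_one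
  obtain ⟨C, hC⟩ := Dfun_bound hf hg hz₀
  have hKey : HasFDerivAt (fun x => ∫ t in (0:ℝ)..1, qfun n f g t x)
      (∫ t in (0:ℝ)..1, Dfun n f g t z₀) z₀ := by
    refine intervalIntegral.hasFDerivAt_integral_of_dominated_of_fderiv_le
      (𝕜 := ℂ) (μ := volume) (F := fun x t => qfun n f g t x)
      (F' := fun x t => Dfun n f g t x) (bound := fun _ => C) (ball_mem_nhds z₀ hε0) ?_ ?_ ?_ ?_ ?_ ?_
    · filter_upwards [ball_mem_nhds z₀ hε0] with x hx
      rw [hIoc]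
      exact ((qfun_contOn hf hg (hsub2 x hx)).mono Set.Ioc_subset_Icc_self).aestronglyMeasurable
        measurableSet_Ioc
    · refine ContinuousOn.intervalIntegrable ?_
      rw [hIcc]
      exact qfun_contOn hf hg hz₀
    · rw [hIoc]
      exact ((Dfun_contOn hf hg hz₀).mono Set.Ioc_subset_Icc_self).aestronglyMeasurable
        measurableSet_Ioc
    · refine Filter.Eventually.of_forall fun t ht => fun x hx => ?_
      rw [hIoc] at ht
      exact hC t (Set.Ioc_subset_Icc_self ht) x (hsub hx)
    · exact intervalIntegrable_const
    · refine Filter.Eventually.of_forall fun t ht => fun x hx => ?_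
      rw [hIoc] at ht
      exact qfun_hasFDerivAt hf hg (Set.Ioc_subset_Icc_self ht) (hsub2 x hx)
  have hEq : Ig n g f =ᶠ[nhds z₀] (fun x => ∫ t in (0:ℝ)..1, qfun n f g t x) := by
    filter_upwards [ball_mem_nhds z₀ hε0] with x hx
    exact Ig_eq_q (hsub2 x hx)
  have hIgD : HasFDerivAt (Ig n g f) (∫ t in (0:ℝ)..1, Dfun n f g t z₀) z₀ :=
    hKey.congr_of_eventuallyEq hEq
  refine ⟨hIgD, ?_⟩
  rw [rad_apply, hIgD.fderiv]
  have hDint : IntervalIntegrable (fun t => Dfun n f g t z₀) volume 0 1 := by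
    refine ContinuousOn.intervalIntegrable ?_
    rw [hIcc]
    exact Dfun_contOn hf hg hz₀
  rw [ContinuousLinearMap.intervalIntegral_apply hDint z₀]
  rw [int_D_apply hf hg hz₀, qfun_eq]
  rw [one_smul, rad_apply]

end ig4

section final
variable {n : ℕ}

lemma radrad_Ig {f g : E n → ℂ} (hf : DifferentiableOn ℂ f (uball n))
    (hg : DifferentiableOn ℂ g (uball n)) {z : E n} (hz : z ∈ uball n) :
    rad n (rad n (Ig n g f)) z
      = rad n (rad n f) z * g z + rad n f z * rad n g z := by
  have hop : IsOpen (uball n) := isOpen_ball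
  have hEq : rad n (Ig n g f) =ᶠ[nhds z] (fun w => rad n f w * g w) := by
    filter_upwards [hop.mem_nhds hz] with w hw
    exact (Ig_deriv hf hg hw).2
  have h1 : DifferentiableAt ℂ (rad n f) z :=
    (rad_diffOn hf).differentiableAt (hop.mem_nhds hz)
  have h2 : DifferentiableAt ℂ g z := hg.differentiableAt (hop.mem_nhds hz)
  have hmul : HasFDerivAt (fun w => rad n f w * g w)
      (rad n f z • fderiv ℂ g z + g z • fderiv ℂ (rad n f) z) z :=
    h1.hasFDerivAt.mul h2.hasFDerivAt
  rw [rad_apply, hEq.fderiv_eq, hmul.fderiv]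
  rw [ContinuousLinearMap.add_apply, ContinuousLinearMap.smul_apply,
    ContinuousLinearMap.smul_apply, smul_eq_mul, smul_eq_mul]
  rw [rad_apply (rad n f) z, rad_apply g z]
  ring

lemma Ig_zero (f g : E n → ℂ) : Ig n g f 0 = 0 := by
  rw [Ig]
  have : ∀ t : ℝ, rad n f (t • (0:E n)) * g (t • (0:E n)) / (t:ℂ) = 0 := by
    intro t
    rw [smul_zero, rad_zero, zero_mul, zero_div]
  simp only [this]
  simp

theorem Ig_bounded_core (g : E n → ℂ)
    (hg : DifferentiableOn ℂ g (uball n))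
    (hbd : ∃ K : ℝ, ∀ z ∈ uball n, ‖g z‖ ≤ K)
    (hlog : ∃ K : ℝ, ∀ z ∈ uball n,
      (1 - ‖z‖ ^ 2) * ‖rad n g z‖ * Real.log (2 / (1 - ‖z‖ ^ 2)) ≤ K) :
    ∃ C > (0:ℝ), ∀ f : E n → ℂ, DifferentiableOn ℂ f (uball n) → BddAbove (zygSet n f) →
      BddAbove (zygSet n (Ig n g f)) ∧
      ‖Ig n g f 0‖ + sSup (zygSet n (Ig n g f)) ≤
        C * (‖f 0‖ + sSup (zygSet n f)) := by
  obtain ⟨K₁, hK₁⟩ := hbd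
  obtain ⟨K₂, hK₂⟩ := hlog
  set K₁' := max K₁ 0 with hK₁'def
  set K₂' := max K₂ 0 with hK₂'def
  have hK₁'0 : 0 ≤ K₁' := le_max_right _ _
  have hK₂'0 : 0 ≤ K₂' := le_max_right _ _
  refine ⟨K₁' + 6 * K₂' + 1, by positivity, ?_⟩
  intro f hf hb
  set M := sSup (zygSet n f) with hMdef
  have hM0 : 0 ≤ M := sSup_zyg_nonneg hb
  have hkey : ∀ x ∈ zygSet n (Ig n g f), x ≤ (K₁' + 6 * K₂') * M := by
    rintro x ⟨z, hz, rfl⟩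
    have hpos := pos_one_sub_sq hz
    have hL0 : 0 < Real.log (2 / (1 - ‖z‖ ^ 2)) := by
      have := log_two_le_L hz
      have h2 : (0.6931471803:ℝ) < Real.log 2 := Real.log_two_gt_d9
      linarith
    rw [radrad_Ig hf hg hz]
    calc (1 - ‖z‖ ^ 2) * ‖rad n (rad n f) z * g z + rad n f z * rad n g z‖
        ≤ (1 - ‖z‖ ^ 2) * (‖rad n (rad n f) z‖ * ‖g z‖
          + ‖rad n f z‖ * ‖rad n g z‖) := by
          refine mul_le_mul_of_nonneg_left ?_ hpos.le
          refine (norm_add_le _ _).trans_eq ?_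
          rw [norm_mul, norm_mul]
      _ = (1 - ‖z‖ ^ 2) * ‖rad n (rad n f) z‖ * ‖g z‖
          + (1 - ‖z‖ ^ 2) * ‖rad n f z‖ * ‖rad n g z‖ := by ring
      _ ≤ M * K₁' + 6 * M * K₂' := by
          refine add_le_add ?_ ?_
          · refine mul_le_mul (zyg_bound hb hz) ((hK₁ z hz).trans (le_max_left _ _))
              (norm_nonneg _) hM0
          · calc (1 - ‖z‖ ^ 2) * ‖rad n f z‖ * ‖rad n g z‖
                ≤ (1 - ‖z‖ ^ 2) * (6 * M * Real.log (2 / (1 - ‖z‖ ^ 2)))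
                    * ‖rad n g z‖ := by
                  refine mul_le_mul_of_nonneg_right ?_ (norm_nonneg _)
                  exact mul_le_mul_of_nonneg_left (radf_log_bound hf hb hz) hpos.le
              _ = 6 * M * ((1 - ‖z‖ ^ 2) * ‖rad n g z‖
                    * Real.log (2 / (1 - ‖z‖ ^ 2))) := by ring
              _ ≤ 6 * M * K₂' := by
                  refine mul_le_mul_of_nonneg_left ((hK₂ z hz).trans (le_max_left _ _))
                    (by positivity)
      _ = (K₁' + 6 * K₂') * M := by ring
  have hbdd : BddAbove (zygSet n (Ig n g f)) := ⟨(K₁' + 6 * K₂') * M, hkey⟩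
  refine ⟨hbdd, ?_⟩
  have hsup : sSup (zygSet n (Ig n g f)) ≤ (K₁' + 6 * K₂') * M :=
    csSup_le ⟨0, zero_mem_zygSet _⟩ hkey
  rw [Ig_zero f g]
  simp only [norm_zero]
  have habs0 : 0 ≤ ‖f 0‖ := norm_nonneg _
  nlinarith [hsup, hM0, habs0, hK₁'0, hK₂'0]

end final

/-- **Theorem 2 (sufficiency).** If `g ∈ H^∞ ∩ ℬ_log`, then `I_g` is bounded on the
Zygmund space. -/
theorem Ig_bounded_of_bounded_and_Blog (n : ℕ) (hn : 1 ≤ n) (g : E n → ℂ)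
    (hg : DifferentiableOn ℂ g (uball n))
    (hbd : ∃ K : ℝ, ∀ z ∈ uball n, ‖g z‖ ≤ K)
    (hlog : ∃ K : ℝ, ∀ z ∈ uball n,
      (1 - ‖z‖ ^ 2) * ‖rad n g z‖ * Real.log (2 / (1 - ‖z‖ ^ 2)) ≤ K) :
    ∃ C > (0:ℝ), ∀ f : E n → ℂ, DifferentiableOn ℂ f (uball n) → memZ n f →
      memZ n (Ig n g f) ∧ zygNorm n (Ig n g f) ≤ C * zygNorm n f := by
  obtain ⟨C, hC0, hC⟩ := Ig_bounded_core g hg hbd hlog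
  exact ⟨C, hC0, fun f hf hm => hC f hf hm⟩
end
end

section
/- Let n ≥ 1 and β > 0. There exists a constant C > 0 such that for all z, w in the open unit ball B of ℂⁿ, the kernel L(z,w) = ∫₀¹ ((1 − t⟨z,w⟩)^{−(n+1+β)} − 1)·dt/t satisfies |L(z,w)| ≤ C/|1 − ⟨z,w⟩|^{n+β}, where ⟨z,w⟩ = Σ_{j=1}^n z_j·conj(w_j) is the Hermitian inner product and powers are taken with the principal branch (note Re(1 − t⟨z,w⟩) > 0 for 0 ≤ t ≤ 1 and z, w ∈ B). -/
open MeasureTheory Metric Filter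

noncomputable section

/-- The Hermitian pairing `⟨z,w⟩ = ∑ z_j conj(w_j)`. -/
def hip (n : ℕ) (z w : E n) : ℂ := ∑ j : Fin n, z j * (starRingEnd ℂ) (w j)

/-- Absolute value of a complex power with real exponent. -/
lemma abs_cpow_real' (z : ℂ) (hz : z ≠ 0) (r : ℝ) :
    ‖z ^ (r:ℂ)‖ = ‖z‖ ^ r := by
  rw [Complex.norm_cpow_of_ne_zero hz]; simp

set_option maxHeartbeats 1000000 in
/-- The scalar version of the kernel estimate. -/
lemma key_estimate (S : ℝ) (hS : 2 < S) :
    ∃ C > (0:ℝ), ∀ a : ℂ, ‖a‖ < 1 →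
      ‖∫ t in (0:ℝ)..1, ((1 - (t:ℂ) * a) ^ (-(S:ℂ)) - 1) / (t:ℂ)‖
        ≤ C / ‖1 - a‖ ^ (S - 1) := by
  have hS0 : (0:ℝ) < S := by linarith
  have hS1 : (0:ℝ) < S - 1 := by linarith
  set K₁ : ℝ := S * 2 ^ (S+1) + 2 with hK₁def
  set K₂ : ℝ := 2 ^ (S+1) with hK₂def
  have hK₂0 : (0:ℝ) < K₂ := Real.rpow_pos_of_pos two_pos _
  have hK₁0 : (0:ℝ) < K₁ := by positivity
  refine ⟨(K₁ + K₂ / (S-1)) * 2 ^ (S-1), by positivity, ?_⟩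
  intro a ha
  -- basic facts
  have h1a0 : 0 < ‖1 - a‖ := by
    have h1 : ‖(1:ℂ)‖ ≤ ‖1 - a‖ + ‖a‖ := by
      simpa using norm_add_le (1 - a) a
    simp only [norm_one] at h1
    linarith
  set x := ‖1 - a‖ with hxdef
  set d : ℝ := x / 2 with hddef
  have hd0 : 0 < d := by positivity
  have hd1 : d ≤ 1 := by
    have hx2 : x ≤ 2 := by
      have := norm_sub_le 1 a
      simp only [norm_one] at this
      rw [hxdef]
      linarith
    rw [hddef]; linarith
  -- lower bounds for |1 - t a|
  have hge1 : ∀ t : ℝ, 0 ≤ t → t ≤ 1 → 1 - t ≤ ‖1 - (t:ℂ) * a‖ := by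
    intro t ht0 ht1
    have h1 : ‖(1:ℂ)‖ ≤ ‖1 - (t:ℂ)*a‖ + ‖(t:ℂ)*a‖ := by
      simpa using norm_add_le (1 - (t:ℂ)*a) ((t:ℂ)*a)
    have h2 : ‖(t:ℂ)*a‖ = t * ‖a‖ := by
      rw [norm_mul, Complex.norm_real, Real.norm_eq_abs, abs_of_nonneg ht0]
    have h3 : t * ‖a‖ ≤ t := by
      nlinarith [norm_nonneg a]
    simp only [norm_one] at h1
    linarith
  have hged : ∀ t : ℝ, 0 ≤ t → t ≤ 1 → d ≤ ‖1 - (t:ℂ) * a‖ := by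
    intro t ht0 ht1
    have h1 : x ≤ ‖1 - (t:ℂ)*a‖ + ‖(t:ℂ)*a - a‖ := by
      have := norm_add_le (1 - (t:ℂ)*a) ((t:ℂ)*a - a)
      simpa [sub_add_sub_cancel] using this
    have h2 : ‖(t:ℂ)*a - a‖ = (1 - t) * ‖a‖ := by
      have he : (t:ℂ)*a - a = -((((1:ℝ) - t : ℝ):ℂ) * a) := by push_cast; ring
      rw [he, norm_neg, norm_mul, Complex.norm_real, Real.norm_eq_abs, abs_of_nonneg (by linarith)]
    have h3 : (1 - t) * ‖a‖ ≤ 1 - t := by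
      nlinarith [norm_nonneg a]
    have h4 := hge1 t ht0 ht1
    rw [hddef]
    linarith
  have hne : ∀ t : ℝ, 0 ≤ t → t ≤ 1 → (1 - (t:ℂ) * a) ≠ 0 := by
    intro t ht0 ht1
    have h := hged t ht0 ht1
    intro h0
    rw [h0, norm_zero] at h
    linarith
  have hslit : ∀ t : ℝ, 0 ≤ t → t ≤ 1 → (1 - (t:ℂ) * a) ∈ Complex.slitPlane := by
    intro t ht0 ht1
    left
    have h1 : (1 - (t:ℂ)*a).re = 1 - t * a.re := by simp
    have h2 : |a.re| ≤ ‖a‖ := Complex.abs_re_le_norm a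
    have h3 : t * a.re ≤ t * |a.re| := by
      nlinarith [le_abs_self a.re]
    simp only [h1]
    nlinarith [abs_nonneg a.re]
  -- the dominating function
  set g : ℝ → ℝ := fun t => K₁ + K₂ * (d + 1 - t) ^ (-S) with hgdef
  have hint : IntervalIntegrable (fun t : ℝ => (d + 1 - t) ^ (-S)) volume 0 1 := by
    apply ContinuousOn.intervalIntegrable
    apply ContinuousOn.rpow_const
    · fun_prop
    · intro t ht
      rw [Set.uIcc_of_le (by norm_num : (0:ℝ) ≤ 1)] at ht
      left
      have : 0 < d + 1 - t := by
        have := ht.2; linarith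
      exact ne_of_gt this
  have hgint : IntervalIntegrable g volume 0 1 :=
    (intervalIntegrable_const).add (hint.const_mul K₂)
  -- pointwise bound
  have hbound : ∀ t ∈ Set.Ioc (0:ℝ) 1,
      ‖((1 - (t:ℂ) * a) ^ (-(S:ℂ)) - 1) / (t:ℂ)‖ ≤ g t := by
    intro t ht
    obtain ⟨ht0, ht1⟩ := ht
    have habs : ‖((1 - (t:ℂ) * a) ^ (-(S:ℂ)) - 1) / (t:ℂ)‖
        = ‖(1 - (t:ℂ) * a) ^ (-(S:ℂ)) - 1‖ / t := by
      rw [norm_div, Complex.norm_real, Real.norm_eq_abs, abs_of_pos ht0]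
    rw [habs]
    have hXabs : ‖(1 - (t:ℂ) * a) ^ (-(S:ℂ))‖
        = ‖1 - (t:ℂ) * a‖ ^ (-S) := by
      have he : (-(S:ℂ)) = ((-S : ℝ) : ℂ) := by push_cast; ring
      rw [he, abs_cpow_real' _ (hne t ht0.le ht1) (-S)]
    have hrg : 0 ≤ K₂ * (d + 1 - t) ^ (-S) := by
      have hdt : (0:ℝ) < d + 1 - t := by linarith
      positivity
    rcases le_or_gt t (1/2) with hhalf | hhalf
    · -- small t : mean value inequality
      set c : ℂ := -(S:ℂ) with hcdef
      set f : ℝ → ℂ := fun u => (1 - (u:ℂ) * a) ^ c with hfdef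
      set f' : ℝ → ℂ := fun u => c * (1 - (u:ℂ) * a) ^ (c - 1) * -(1 * a) with hf'def
      have habsc : ‖c‖ = S := by
        rw [hcdef, norm_neg, Complex.norm_real, Real.norm_eq_abs, abs_of_pos hS0]
      have hderiv : ∀ u ∈ Set.Icc (0:ℝ) t, HasDerivWithinAt f (f' u) (Set.Icc 0 t) u := by
        intro u hu
        have hu0 := hu.1
        have hu1 : u ≤ 1 := le_trans hu.2 ht1
        have hG : HasDerivAt (fun z : ℂ => (1 - z * a) ^ c)
            (c * (1 - (u:ℂ) * a) ^ (c - 1) * -(1 * a)) ((u:ℝ):ℂ) := by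
          exact (((hasDerivAt_id ((u:ℝ):ℂ)).mul_const a).const_sub 1).cpow_const
            (hslit u hu0 hu1)
        exact (hG.comp_ofReal).hasDerivWithinAt
      have hbnd : ∀ u ∈ Set.Icc (0:ℝ) t, ‖f' u‖ ≤ S * 2 ^ (S+1) := by
        intro u hu
        have hu0 := hu.1
        have hu1 : u ≤ 1 := le_trans hu.2 ht1
        have hhalfu : (1/2 : ℝ) ≤ ‖1 - (u:ℂ) * a‖ := by
          have h := hge1 u hu0 hu1
          have hu2 : u ≤ 1/2 := le_trans hu.2 hhalf
          linarith
        have hc1 : ‖(1 - (u:ℂ) * a) ^ (c - 1)‖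
            = ‖1 - (u:ℂ) * a‖ ^ (-S - 1) := by
          have he : c - 1 = ((-S - 1 : ℝ) : ℂ) := by rw [hcdef]; push_cast; ring
          rw [he, abs_cpow_real' _ (hne u hu0 hu1) _]
        have hc2 : ‖1 - (u:ℂ) * a‖ ^ (-S - 1) ≤ 2 ^ (S+1) := by
          have h1 : ‖1 - (u:ℂ) * a‖ ^ (-S - 1) ≤ (1/2 : ℝ) ^ (-S - 1) :=
            Real.rpow_le_rpow_of_nonpos (by norm_num) hhalfu (by linarith)
          have h2 : (1/2:ℝ) ^ (-S-1) = 2 ^ (S+1) := by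
            rw [one_div, Real.inv_rpow (by norm_num : (0:ℝ) ≤ 2),
              ← Real.rpow_neg (by norm_num : (0:ℝ) ≤ 2)]
            ring_nf
          linarith [h1, h2.le, h2.ge]
        have hnorm : ‖f' u‖
            = S * (‖1 - (u:ℂ) * a‖ ^ (-S - 1)) * ‖a‖ := by
          simp only [hf'def, norm_mul]
          rw [norm_neg, Complex.norm_real, Real.norm_eq_abs, abs_of_pos hS0, hc1, one_mul,
            norm_neg]
        rw [hnorm]
        have haa : ‖a‖ ≤ 1 := ha.le
        have h0 : 0 ≤ ‖1 - (u:ℂ) * a‖ ^ (-S - 1) :=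
          Real.rpow_nonneg (norm_nonneg _) _
        calc S * ‖1 - (u:ℂ) * a‖ ^ (-S - 1) * ‖a‖
            ≤ S * ‖1 - (u:ℂ) * a‖ ^ (-S - 1) * 1 := by
              apply mul_le_mul_of_nonneg_left haa
              positivity
          _ = S * ‖1 - (u:ℂ) * a‖ ^ (-S - 1) := mul_one _
          _ ≤ S * 2 ^ (S+1) := mul_le_mul_of_nonneg_left hc2 hS0.le
      have hmvt := (convex_Icc (0:ℝ) t).norm_image_sub_le_of_norm_hasDerivWithin_le
        hderiv hbnd (Set.left_mem_Icc.2 ht0.le) (Set.right_mem_Icc.2 ht0.le)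
      have hf0 : f 0 = 1 := by
        simp only [hfdef]
        norm_num
      rw [hf0] at hmvt
      have hmvt' : ‖(1 - (t:ℂ) * a) ^ (-(S:ℂ)) - 1‖ ≤ S * 2 ^ (S+1) * t := by
        have he : ‖f t - 1‖ = ‖(1 - (t:ℂ) * a) ^ (-(S:ℂ)) - 1‖ := by
          simp [hfdef, hcdef]
        rw [he] at hmvt
        simpa [Real.norm_eq_abs, abs_of_pos ht0] using hmvt
      have hdiv : ‖(1 - (t:ℂ) * a) ^ (-(S:ℂ)) - 1‖ / t ≤ S * 2 ^ (S+1) := by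
        rw [div_le_iff₀ ht0]
        linarith
      have hg1 : S * 2 ^ (S+1) ≤ g t := by
        simp only [hgdef, hK₁def]
        linarith
      linarith
    · -- large t
      have h1t : 1 / t ≤ 2 := by
        rw [div_le_iff₀ ht0]; linarith
      have htri : ‖(1 - (t:ℂ) * a) ^ (-(S:ℂ)) - 1‖
          ≤ ‖1 - (t:ℂ) * a‖ ^ (-S) + 1 := by
        have h := norm_sub_le ((1 - (t:ℂ) * a) ^ (-(S:ℂ))) 1
        simpa [hXabs] using h
      have hd2 : (d + 1 - t) / 2 ≤ ‖1 - (t:ℂ) * a‖ := by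
        have h1 := hge1 t ht0.le ht1
        have h2 := hged t ht0.le ht1
        linarith
      have hdt0 : (0:ℝ) < d + 1 - t := by linarith
      have hX2 : ‖1 - (t:ℂ) * a‖ ^ (-S) ≤ (d + 1 - t) ^ (-S) * 2 ^ S := by
        have h1 : ‖1 - (t:ℂ) * a‖ ^ (-S) ≤ ((d + 1 - t)/2) ^ (-S) :=
          Real.rpow_le_rpow_of_nonpos (by positivity) hd2 (by linarith)
        have h4 : ((d + 1 - t)/2) ^ (-S) = (d + 1 - t) ^ (-S) * 2 ^ S := by
          rw [Real.div_rpow hdt0.le (by norm_num : (0:ℝ) ≤ 2),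
            Real.rpow_neg (by norm_num : (0:ℝ) ≤ 2), div_eq_mul_inv, inv_inv]
        linarith [h1, h4.le, h4.ge]
      have hK2 : (2:ℝ) ^ (S+1) = 2 * 2 ^ S := by
        rw [Real.rpow_add (by norm_num : (0:ℝ) < 2), Real.rpow_one]; ring
      have hpos2 : (0:ℝ) ≤ (d + 1 - t) ^ (-S) := Real.rpow_nonneg hdt0.le _
      have step : ‖(1 - (t:ℂ) * a) ^ (-(S:ℂ)) - 1‖ / t
          ≤ 2 * ((d + 1 - t) ^ (-S) * 2 ^ S + 1) := by
        have hnn : 0 ≤ ‖(1 - (t:ℂ) * a) ^ (-(S:ℂ)) - 1‖ := norm_nonneg _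
        calc ‖(1 - (t:ℂ) * a) ^ (-(S:ℂ)) - 1‖ / t
            = ‖(1 - (t:ℂ) * a) ^ (-(S:ℂ)) - 1‖ * (1/t) := by ring
          _ ≤ ‖(1 - (t:ℂ) * a) ^ (-(S:ℂ)) - 1‖ * 2 :=
              mul_le_mul_of_nonneg_left h1t hnn
          _ ≤ (‖1 - (t:ℂ) * a‖ ^ (-S) + 1) * 2 :=
              mul_le_mul_of_nonneg_right htri (by norm_num)
          _ ≤ ((d + 1 - t) ^ (-S) * 2 ^ S + 1) * 2 :=
              mul_le_mul_of_nonneg_right (by linarith) (by norm_num)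
          _ = 2 * ((d + 1 - t) ^ (-S) * 2 ^ S + 1) := by ring
      have hfin : 2 * ((d + 1 - t) ^ (-S) * 2 ^ S + 1) ≤ g t := by
        simp only [hgdef, hK₁def, hK₂def, hK2]
        have h2S : (0:ℝ) < 2 ^ S := Real.rpow_pos_of_pos two_pos S
        nlinarith [Real.rpow_pos_of_pos two_pos (S+1)]
      exact step.trans hfin
  -- main integral bound
  have hmain : ‖∫ t in (0:ℝ)..1, ((1 - (t:ℂ) * a) ^ (-(S:ℂ)) - 1) / (t:ℂ)‖
      ≤ |∫ t in (0:ℝ)..1, g t| := by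
    refine (intervalIntegral.norm_integral_le_of_norm_le (by norm_num : (0:ℝ) ≤ 1) ?_ hgint).trans
      (le_abs_self _)
    exact Filter.Eventually.of_forall fun t ht => hbound t ht
  -- compute / bound ∫ g
  have hIval : ∫ t in (0:ℝ)..1, (d + 1 - t) ^ (-S) ≤ d ^ (1-S) / (S-1) := by
    have hcomp : ∫ t in (0:ℝ)..1, (d + 1 - t) ^ (-S) = ∫ u in d..(d+1), u ^ (-S) := by
      have := intervalIntegral.integral_comp_sub_left (a := (0:ℝ)) (b := 1)
        (fun u : ℝ => u ^ (-S)) (d+1)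
      simpa using this
    have hval : ∫ u in d..(d+1), u ^ (-S)
        = ((d+1) ^ (-S+1) - d ^ (-S+1)) / (-S+1) := by
      apply integral_rpow
      right
      constructor
      · intro h; linarith [h]
      · rw [Set.uIcc_of_le (by linarith : d ≤ d + 1)]
        intro h
        exact absurd h.1 (by linarith)
    rw [hcomp, hval]
    have h1 : (0:ℝ) ≤ (d+1) ^ (-S+1) := Real.rpow_nonneg (by linarith) _
    have heq : ((d+1) ^ (-S+1) - d ^ (-S+1)) / (-S+1)
        = (d ^ (-S+1) - (d+1) ^ (-S+1)) / (S-1) := by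
      rw [div_eq_div_iff (by linarith) (by linarith)]
      ring
    rw [heq]
    have hexp : d ^ (-S+1) = d ^ (1-S) := by
      congr 1; ring
    rw [hexp]
    gcongr
    linarith
  have hgval : ∫ t in (0:ℝ)..1, g t = K₁ + K₂ * ∫ t in (0:ℝ)..1, (d + 1 - t) ^ (-S) := by
    simp only [hgdef]
    rw [intervalIntegral.integral_add intervalIntegrable_const (hint.const_mul K₂),
      intervalIntegral.integral_const, intervalIntegral.integral_const_mul]
    simp
  have hgnn : 0 ≤ ∫ t in (0:ℝ)..1, g t := by
    apply intervalIntegral.integral_nonneg (by norm_num : (0:ℝ) ≤ 1)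
    intro u hu
    have hdu : (0:ℝ) ≤ d + 1 - u := by linarith [hu.2]
    have := Real.rpow_nonneg hdu (-S)
    simp only [hgdef]
    nlinarith
  have hdge : (1:ℝ) ≤ d ^ (1-S) := by
    have h := Real.rpow_le_rpow_of_nonpos hd0 hd1 (by linarith : 1 - S ≤ 0)
    rwa [Real.one_rpow] at h
  have hdval : d ^ (1-S) = 2 ^ (S-1) / x ^ (S-1) := by
    rw [hddef, show (1-S : ℝ) = -(S-1) by ring, Real.rpow_neg (by positivity),
      Real.div_rpow h1a0.le (by norm_num : (0:ℝ) ≤ 2), inv_div]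
  have hIbound : ∫ t in (0:ℝ)..1, g t ≤ (K₁ + K₂ / (S-1)) * d ^ (1-S) := by
    rw [hgval]
    have h1 : K₂ * ∫ t in (0:ℝ)..1, (d + 1 - t) ^ (-S) ≤ K₂ * (d ^ (1-S) / (S-1)) :=
      mul_le_mul_of_nonneg_left hIval hK₂0.le
    have h2 : K₁ ≤ K₁ * d ^ (1-S) := by
      calc K₁ = K₁ * 1 := (mul_one _).symm
        _ ≤ K₁ * d ^ (1-S) := mul_le_mul_of_nonneg_left hdge hK₁0.le
    have h3 : K₂ * (d ^ (1-S) / (S-1)) = (K₂ / (S-1)) * d ^ (1-S) := by ring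
    calc K₁ + K₂ * ∫ t in (0:ℝ)..1, (d + 1 - t) ^ (-S)
        ≤ K₁ * d ^ (1-S) + K₂ * (d ^ (1-S) / (S-1)) := add_le_add h2 h1
      _ = (K₁ + K₂ / (S-1)) * d ^ (1-S) := by ring
  calc ‖∫ t in (0:ℝ)..1, ((1 - (t:ℂ) * a) ^ (-(S:ℂ)) - 1) / (t:ℂ)‖
      ≤ |∫ t in (0:ℝ)..1, g t| := hmain
    _ = ∫ t in (0:ℝ)..1, g t := abs_of_nonneg hgnn
    _ ≤ (K₁ + K₂ / (S-1)) * d ^ (1-S) := hIbound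
    _ = (K₁ + K₂ / (S-1)) * 2 ^ (S-1) / x ^ (S-1) := by
        rw [hdval]; ring

/-- **Kernel estimate.** `|L(z,w)| ≤ C / |1-⟨z,w⟩|^{n+β}` where
`L(z,w) = ∫₀¹ ((1-t⟨z,w⟩)^{-(n+1+β)} - 1) dt/t`. -/
theorem kernel_estimate (n : ℕ) (hn : 1 ≤ n) (β : ℝ) (hβ : 0 < β) :
    ∃ C > (0:ℝ), ∀ z ∈ uball n, ∀ w ∈ uball n,
      ‖∫ t in (0:ℝ)..1,
          ((1 - (t : ℂ) * hip n z w) ^ (-((n : ℂ) + 1 + (β : ℂ))) - 1) / (t : ℂ)‖ ≤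
        C / ‖1 - hip n z w‖ ^ ((n : ℝ) + β) := by
  have hn1 : (1:ℝ) ≤ (n:ℝ) := by exact_mod_cast hn
  obtain ⟨C, hC0, hC⟩ := key_estimate ((n:ℝ) + 1 + β) (by linarith)
  refine ⟨C, hC0, ?_⟩
  intro z hz w hw
  have hz' : ‖z‖ < 1 := by simpa [uball, mem_ball_zero_iff] using hz
  have hw' : ‖w‖ < 1 := by simpa [uball, mem_ball_zero_iff] using hw
  have hinner : hip n z w = (inner ℂ w z : ℂ) := by
    simp only [hip, PiLp.inner_apply, RCLike.inner_apply]
  have ha : ‖hip n z w‖ < 1 := by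
    rw [hinner]
    calc ‖(inner ℂ w z : ℂ)‖ ≤ ‖w‖ * ‖z‖ := norm_inner_le_norm w z
      _ < 1 := by nlinarith [norm_nonneg z, norm_nonneg w]
  have h1 := hC (hip n z w) ha
  have hecast : -((((n:ℝ) + 1 + β : ℝ)) : ℂ) = -((n : ℂ) + 1 + (β : ℂ)) := by
    push_cast; ring
  have hexp : (n:ℝ) + 1 + β - 1 = (n:ℝ) + β := by ring
  rw [hecast, hexp] at h1
  exact h1
end
end
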